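/- arXiv:2210.04652 — 11 statements merged into one kernel-verified Lean document; each statement's English description precedes it below -/
import Mathlib

section
/- For every number of colors c ≥ 2, there exists a feasible strategy for the Static Black-Peg AB Game with 2 pegs and c colors consisting of exactly ⌈4c/3⌉ − 2 questions. -/
/-- The answer of a question `Q` to a secret `S`: the number of pegs where they agree. -/
def answer {p c : ℕ} (Q S : Fin p → Fin c) : ℕ :=
  (Finset.univ.filter fun i => Q i = S i).card

/-- A strategy (a list of pairwise distinct injective codes) is feasible if the list of
answers determines every injective secret uniquely. -/
def Feasible {p c : ℕ} (qs : List (Fin p → Fin c)) : Prop :=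
  qs.Nodup ∧ (∀ Q ∈ qs, Function.Injective Q) ∧
    ∀ S S' : Fin p → Fin c, Function.Injective S → Function.Injective S' →
      qs.map (fun Q => answer Q S) = qs.map (fun Q => answer Q S') → S = S'

/-- The number of questions of the strategy `qs` having color `q` on peg `i`. -/
def occ {p c : ℕ} (qs : List (Fin p → Fin c)) (i : Fin p) (q : Fin c) : ℕ :=
  qs.countP fun Q => decide (Q i = q)

namespace ABaux

/-- Natural number model of the answer of a question (pair) to a secret (pair). -/
def ansP (q s : ℕ × ℕ) : ℕ :=
  (if q.1 = s.1 then 1 else 0) + (if q.2 = s.2 then 1 else 0)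

def ansL (qs : List (ℕ × ℕ)) (s : ℕ × ℕ) : List ℕ := qs.map fun q => ansP q s

def block (g : ℕ) : List (ℕ × ℕ) :=
  [(3*g, 3*g+1), (3*g, 3*g+2), (3*g+1, 3*g), (3*g+2, 3*g)]

def normal : ℕ → List (ℕ × ℕ)
  | 0 => []
  | k+1 => normal k ++ block k

/-- state of a color relative to the block of colors {3g,3g+1,3g+2} -/
def st (g x : ℕ) : ℕ :=
  if x = 3*g then 0 else if x = 3*g+1 then 1 else if x = 3*g+2 then 2 else 3

lemma st_lt (g x : ℕ) : st g x < 4 := by unfold st; split_ifs <;> omega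

lemma ind0 (g x : ℕ) : (if 3*g = x then (1:ℕ) else 0) = (if st g x = 0 then 1 else 0) := by
  unfold st; split_ifs <;> first | omega | exact ‹False›.elim

lemma ind1 (g x : ℕ) : (if 3*g+1 = x then (1:ℕ) else 0) = (if st g x = 1 then 1 else 0) := by
  unfold st; split_ifs <;> first | omega | exact ‹False›.elim

lemma ind2 (g x : ℕ) : (if 3*g+2 = x then (1:ℕ) else 0) = (if st g x = 2 then 1 else 0) := by
  unfold st; split_ifs <;> first | omega | exact ‹False›.elim

lemma core : ∀ u v u' v' : Fin 4,
    ((if u.val = 0 then (1:ℕ) else 0) + (if v.val = 1 then 1 else 0)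
      = (if u'.val = 0 then 1 else 0) + (if v'.val = 1 then 1 else 0)) →
    ((if u.val = 0 then (1:ℕ) else 0) + (if v.val = 2 then 1 else 0)
      = (if u'.val = 0 then 1 else 0) + (if v'.val = 2 then 1 else 0)) →
    ((if u.val = 1 then (1:ℕ) else 0) + (if v.val = 0 then 1 else 0)
      = (if u'.val = 1 then 1 else 0) + (if v'.val = 0 then 1 else 0)) →
    ((if u.val = 2 then (1:ℕ) else 0) + (if v.val = 0 then 1 else 0)
      = (if u'.val = 2 then 1 else 0) + (if v'.val = 0 then 1 else 0)) →
    u = u' ∧ v = v' := by decide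

lemma block_eq (g x y x' y' : ℕ)
    (h : ansL (block g) (x, y) = ansL (block g) (x', y')) :
    st g x = st g x' ∧ st g y = st g y' := by
  simp only [ansL, block, ansP, List.map_cons, List.map_nil, List.cons.injEq, and_true] at h
  obtain ⟨h1, h2, h3, h4⟩ := h
  rw [ind0 g x, ind1 g y, ind0 g x', ind1 g y'] at h1
  rw [ind0 g x, ind2 g y, ind0 g x', ind2 g y'] at h2
  rw [ind1 g x, ind0 g y, ind1 g x', ind0 g y'] at h3
  rw [ind2 g x, ind0 g y, ind2 g x', ind0 g y'] at h4
  have := core ⟨st g x, st_lt g x⟩ ⟨st g y, st_lt g y⟩ ⟨st g x', st_lt g x'⟩ ⟨st g y', st_lt g y'⟩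
    h1 h2 h3 h4
  exact ⟨congrArg Fin.val this.1, congrArg Fin.val this.2⟩

lemma SP (k : ℕ) : ∀ x y x' y' : ℕ, ansL (normal k) (x, y) = ansL (normal k) (x', y') →
    (x = x' ∨ (3*k ≤ x ∧ 3*k ≤ x')) ∧ (y = y' ∨ (3*k ≤ y ∧ 3*k ≤ y')) := by
  induction k with
  | zero =>
    intro x y x' y' _
    exact ⟨Or.inr ⟨Nat.zero_le _, Nat.zero_le _⟩, Or.inr ⟨Nat.zero_le _, Nat.zero_le _⟩⟩
  | succ k ih =>
    intro x y x' y' h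
    simp only [normal, ansL, List.map_append] at h
    obtain ⟨h1, h2⟩ := List.append_inj h (by simp)
    have H := ih x y x' y' h1
    have B := block_eq k x y x' y' h2
    constructor
    · rcases H.1 with hx | hx
      · exact Or.inl hx
      · have hb := B.1
        unfold st at hb
        split_ifs at hb <;> omega
    · rcases H.2 with hy | hy
      · exact Or.inl hy
      · have hb := B.2
        unfold st at hb
        split_ifs at hb <;> omega

lemma normal_length (k : ℕ) : (normal k).length = 4*k := by
  induction k with
  | zero => rfl
  | succ k ih => simp [normal, block, ih]; omega

lemma normal_mem (k : ℕ) : ∀ a b : ℕ, (a, b) ∈ normal k → a < 3*k ∧ b < 3*k ∧ a ≠ b := by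
  induction k with
  | zero => intro a b hq; simp [normal] at hq
  | succ k ih =>
    intro a b hq
    simp only [normal, List.mem_append] at hq
    rcases hq with h | h
    · have := ih a b h; omega
    · simp [block, Prod.ext_iff] at h
      omega

lemma block_nodup (g : ℕ) : (block g).Nodup := by
  simp [block, Prod.ext_iff]
  try omega

lemma normal_nodup (k : ℕ) : (normal k).Nodup := by
  induction k with
  | zero => exact List.nodup_nil
  | succ k ih =>
    simp only [normal]
    refine List.Nodup.append ih (block_nodup k) ?_
    intro q hq1 hq2
    obtain ⟨a, b⟩ := q
    have h1 := normal_mem k a b hq1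
    simp [block, Prod.ext_iff] at hq2
    omega

/-- A good natural-number strategy for `c` colors. -/
def GoodN (c : ℕ) (qs : List (ℕ × ℕ)) : Prop :=
  qs.Nodup ∧ (∀ a b : ℕ, (a, b) ∈ qs → a < c ∧ b < c ∧ a ≠ b) ∧
  ∀ x y x' y' : ℕ, x < c → y < c → x' < c → y' < c → x ≠ y → x' ≠ y' →
    ansL qs (x, y) = ansL qs (x', y') → x = x' ∧ y = y'

lemma good1 (k : ℕ) : GoodN (3*k+1) (normal k) := by
  refine ⟨normal_nodup k, ?_, ?_⟩
  · intro a b h; have := normal_mem k a b h; omega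
  · intro x y x' y' hx hy hx' hy' hxy hxy' h
    have := SP k x y x' y' h
    omega

lemma good2 (k : ℕ) : GoodN (3*k+2) (normal k ++ [(3*k, 3*k+1)]) := by
  refine ⟨?_, ?_, ?_⟩
  · refine List.Nodup.append (normal_nodup k) (by simp) ?_
    intro q hq1 hq2
    obtain ⟨a, b⟩ := q
    have h1 := normal_mem k a b hq1
    simp [Prod.ext_iff] at hq2
    omega
  · intro a b h
    simp only [List.mem_append] at h
    rcases h with h | h
    · have := normal_mem k a b h; omega
    · simp [Prod.ext_iff] at h; omega
  · intro x y x' y' hx hy hx' hy' hxy hxy' h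
    simp only [ansL, List.map_append] at h
    obtain ⟨h1, h2⟩ := List.append_inj h (by simp)
    have H := SP k x y x' y' h1
    simp only [ansP, List.map_cons, List.map_nil, List.cons.injEq, and_true] at h2
    split_ifs at h2 <;> omega

lemma good3 (k : ℕ) : GoodN (3*k+3) (normal k ++ [(3*k+1, 3*k+2), (3*k+2, 3*k)]) := by
  refine ⟨?_, ?_, ?_⟩
  · refine List.Nodup.append (normal_nodup k) (by simp [Prod.ext_iff]; try omega) ?_
    intro q hq1 hq2
    obtain ⟨a, b⟩ := q
    have h1 := normal_mem k a b hq1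
    simp [Prod.ext_iff] at hq2
    omega
  · intro a b h
    simp only [List.mem_append] at h
    rcases h with h | h
    · have := normal_mem k a b h; omega
    · simp [Prod.ext_iff] at h; omega
  · intro x y x' y' hx hy hx' hy' hxy hxy' h
    simp only [ansL, List.map_append] at h
    obtain ⟨h1, h2⟩ := List.append_inj h (by simp)
    have H := SP k x y x' y' h1
    simp only [ansP, List.map_cons, List.map_nil, List.cons.injEq, and_true] at h2
    obtain ⟨h2a, h2b⟩ := h2
    split_ifs at h2a h2b <;> omega

/-- Turn a pair of naturals into a code. -/
def code (c : ℕ) (hc : 0 < c) (q : ℕ × ℕ) : Fin 2 → Fin c :=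
  ![⟨q.1 % c, Nat.mod_lt _ hc⟩, ⟨q.2 % c, Nat.mod_lt _ hc⟩]

lemma answer_two {c : ℕ} (Q S : Fin 2 → Fin c) :
    answer Q S = (if Q 0 = S 0 then 1 else 0) + (if Q 1 = S 1 then 1 else 0) := by
  rw [answer, Finset.card_filter, Fin.sum_univ_two]

lemma answer_code {c : ℕ} (hc : 0 < c) (q : ℕ × ℕ) (hq1 : q.1 < c) (hq2 : q.2 < c)
    (S : Fin 2 → Fin c) :
    answer (code c hc q) S = ansP q ((S 0).val, (S 1).val) := by
  rw [answer_two]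
  simp [code, ansP, Fin.ext_iff, Nat.mod_eq_of_lt hq1, Nat.mod_eq_of_lt hq2]

lemma feasible_of_goodN (c : ℕ) (hc : 0 < c) (qs : List (ℕ × ℕ)) (h : GoodN c qs) :
    ∃ qs' : List (Fin 2 → Fin c), Feasible qs' ∧ qs'.length = qs.length := by
  obtain ⟨hnd, hmem, hinj⟩ := h
  refine ⟨qs.map (code c hc), ⟨?_, ?_, ?_⟩, by simp⟩
  · refine List.Nodup.map_on ?_ hnd
    intro q hq q' hq' hee
    obtain ⟨a, b⟩ := q
    obtain ⟨a', b'⟩ := q'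
    have h1 := hmem a b hq
    have h2 := hmem a' b' hq'
    have e0 := congrFun hee 0
    have e1 := congrFun hee 1
    simp [code, Fin.ext_iff] at e0 e1
    rw [Nat.mod_eq_of_lt h1.1, Nat.mod_eq_of_lt h2.1] at e0
    rw [Nat.mod_eq_of_lt h1.2.1, Nat.mod_eq_of_lt h2.2.1] at e1
    simp [e0, e1]
  · intro Q hQ
    simp only [List.mem_map] at hQ
    obtain ⟨q, hq, rfl⟩ := hQ
    obtain ⟨a, b⟩ := q
    have hm := hmem a b hq
    intro i j hij
    fin_cases i <;> fin_cases j <;>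
      first
        | rfl
        | (exfalso
           simp [code, Fin.ext_iff, Nat.mod_eq_of_lt hm.1, Nat.mod_eq_of_lt hm.2.1] at hij
           omega)
  · intro S S' hS hS' heq
    simp only [List.map_map] at heq
    have l1 : qs.map ((fun Q => answer Q S) ∘ code c hc)
        = qs.map (fun q => ansP q ((S 0).val, (S 1).val)) := by
      refine List.map_congr_left ?_
      intro q hq
      obtain ⟨a, b⟩ := q
      have := hmem a b hq
      exact answer_code hc (a, b) this.1 this.2.1 S
    have l2 : qs.map ((fun Q => answer Q S') ∘ code c hc)
        = qs.map (fun q => ansP q ((S' 0).val, (S' 1).val)) := by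
      refine List.map_congr_left ?_
      intro q hq
      obtain ⟨a, b⟩ := q
      have := hmem a b hq
      exact answer_code hc (a, b) this.1 this.2.1 S'
    rw [l1, l2] at heq
    have hxy : (S 0).val ≠ (S 1).val := by
      intro he
      have : (0 : Fin 2) = 1 := hS (Fin.ext he)
      simp at this
    have hxy' : (S' 0).val ≠ (S' 1).val := by
      intro he
      have : (0 : Fin 2) = 1 := hS' (Fin.ext he)
      simp at this
    obtain ⟨ex, ey⟩ := hinj _ _ _ _ (S 0).isLt (S 1).isLt (S' 0).isLt (S' 1).isLt hxy hxy' heq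
    funext i
    fin_cases i
    · exact Fin.ext ex
    · exact Fin.ext ey

end ABaux

theorem statement0 (c : ℕ) (hc : 2 ≤ c) :
    ∃ qs : List (Fin 2 → Fin c),
      Feasible qs ∧ qs.length = (4 * c + 2) / 3 - 2 := by
  have hc0 : 0 < c := by omega
  obtain ⟨k, hk | hk | hk⟩ : ∃ k, c = 3*k+1 ∨ c = 3*k+2 ∨ c = 3*k+3 := ⟨(c-1)/3, by omega⟩
  · obtain ⟨qs', hF, hL⟩ := ABaux.feasible_of_goodN c hc0 (ABaux.normal k)
      (by rw [hk]; exact ABaux.good1 k)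
    refine ⟨qs', hF, ?_⟩
    rw [hL, ABaux.normal_length]
    subst hk; omega
  · obtain ⟨qs', hF, hL⟩ := ABaux.feasible_of_goodN c hc0 (ABaux.normal k ++ [(3*k, 3*k+1)])
      (by rw [hk]; exact ABaux.good2 k)
    refine ⟨qs', hF, ?_⟩
    rw [hL]
    simp [ABaux.normal_length]
    subst hk; omega
  · obtain ⟨qs', hF, hL⟩ := ABaux.feasible_of_goodN c hc0
      (ABaux.normal k ++ [(3*k+1, 3*k+2), (3*k+2, 3*k)])
      (by rw [hk]; exact ABaux.good3 k)
    refine ⟨qs', hF, ?_⟩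
    rw [hL]
    simp [ABaux.normal_length]
    subst hk; omega
end

section
/- For every number of colors c ≥ 2, every feasible strategy for the Static Black-Peg AB Game with 2 pegs and c colors consists of at least ⌈4c/3⌉ − 2 questions. -/
open Finset

namespace ABGame

lemma answer_pair {c : ℕ} (Q : Fin 2 → Fin c) (a b : Fin c) :
    answer Q ![a, b] = (if Q 0 = a then 1 else 0) + (if Q 1 = b then 1 else 0) := by
  rw [answer, Finset.card_filter, Fin.sum_univ_two]
  simp only [Matrix.cons_val_zero, Matrix.cons_val_one, Matrix.head_cons]
  congr

lemma inj_pair {c : ℕ} {a b : Fin c} (h : a ≠ b) : Function.Injective ![a, b] := by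
  intro i j hij
  fin_cases i <;> fin_cases j
  · rfl
  · exact absurd (by simpa using hij) h
  · exact absurd ((by simpa using hij : b = a).symm) h
  · rfl

variable {c : ℕ}

def pdeg (F : Finset (Fin 2 → Fin c)) (a : Fin c) : ℕ :=
  (F.filter fun Q => Q 0 = a).card

def rdeg (F : Finset (Fin 2 → Fin c)) (b : Fin c) : ℕ :=
  (F.filter fun Q => Q 1 = b).card

def thinF (F : Finset (Fin 2 → Fin c)) : Finset (Fin 2 → Fin c) :=
  F.filter fun Q => pdeg F (Q 0) = 1 ∧ rdeg F (Q 1) = 1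

def CPhyp (F : Finset (Fin 2 → Fin c)) : Prop :=
  ∀ a b a' b' : Fin c, a ≠ b → a' ≠ b' →
    (∀ Q ∈ F, ((if Q 0 = a then 1 else 0) + (if Q 1 = b then 1 else 0) : ℕ) =
      (if Q 0 = a' then 1 else 0) + (if Q 1 = b' then 1 else 0)) → a = a' ∧ b = b'

lemma mem_thinF {F : Finset (Fin 2 → Fin c)} {Q : Fin 2 → Fin c} :
    Q ∈ thinF F ↔ Q ∈ F ∧ pdeg F (Q 0) = 1 ∧ rdeg F (Q 1) = 1 :=
  Finset.mem_filter

lemma sum_pdeg (F : Finset (Fin 2 → Fin c)) : ∑ a, pdeg F a = F.card :=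
  (Finset.card_eq_sum_card_fiberwise fun Q _ => Finset.mem_univ (Q 0)).symm

lemma sum_rdeg (F : Finset (Fin 2 → Fin c)) : ∑ b, rdeg F b = F.card :=
  (Finset.card_eq_sum_card_fiberwise fun Q _ => Finset.mem_univ (Q 1)).symm

lemma uniq0 (F : Finset (Fin 2 → Fin c)) (a : Fin c) (Q : Fin 2 → Fin c)
    (h1 : pdeg F a = 1) (hQ : Q ∈ F) (hQa : Q 0 = a)
    {R : Fin 2 → Fin c} (hR : R ∈ F) (hRa : R 0 = a) : R = Q := by
  have h := Finset.card_le_one.mp (le_of_eq h1)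
  exact h R (Finset.mem_filter.mpr ⟨hR, hRa⟩) Q (Finset.mem_filter.mpr ⟨hQ, hQa⟩)

lemma uniq1 (F : Finset (Fin 2 → Fin c)) (b : Fin c) (Q : Fin 2 → Fin c)
    (h1 : rdeg F b = 1) (hQ : Q ∈ F) (hQb : Q 1 = b)
    {R : Fin 2 → Fin c} (hR : R ∈ F) (hRb : R 1 = b) : R = Q := by
  have h := Finset.card_le_one.mp (le_of_eq h1)
  exact h R (Finset.mem_filter.mpr ⟨hR, hRb⟩) Q (Finset.mem_filter.mpr ⟨hQ, hQb⟩)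

lemma zero0 (F : Finset (Fin 2 → Fin c)) (a : Fin c) (h : pdeg F a = 0)
    {R : Fin 2 → Fin c} (hR : R ∈ F) : ¬ R 0 = a := by
  intro hRa
  have hmem : R ∈ F.filter fun Q => Q 0 = a := Finset.mem_filter.mpr ⟨hR, hRa⟩
  rw [Finset.card_eq_zero.mp h] at hmem
  exact Finset.notMem_empty R hmem

lemma zero1 (F : Finset (Fin 2 → Fin c)) (b : Fin c) (h : rdeg F b = 0)
    {R : Fin 2 → Fin c} (hR : R ∈ F) : ¬ R 1 = b := by
  intro hRb
  have hmem : R ∈ F.filter fun Q => Q 1 = b := Finset.mem_filter.mpr ⟨hR, hRb⟩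
  rw [Finset.card_eq_zero.mp h] at hmem
  exact Finset.notMem_empty R hmem

lemma pos0 (F : Finset (Fin 2 → Fin c)) {Q : Fin 2 → Fin c} (hQ : Q ∈ F) :
    1 ≤ pdeg F (Q 0) :=
  Finset.card_pos.mpr ⟨Q, Finset.mem_filter.mpr ⟨hQ, rfl⟩⟩

lemma thin_tail (F : Finset (Fin 2 → Fin c)) {Q Q' : Fin 2 → Fin c}
    (hQ : Q ∈ thinF F) (hQ' : Q' ∈ thinF F) (h : Q 0 = Q' 0) : Q = Q' := by
  rw [mem_thinF] at hQ hQ'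
  exact uniq0 F (Q' 0) Q' hQ'.2.1 hQ'.1 rfl hQ.1 h

lemma thin_head (F : Finset (Fin 2 → Fin c)) {Q Q' : Fin 2 → Fin c}
    (hQ : Q ∈ thinF F) (hQ' : Q' ∈ thinF F) (h : Q 1 = Q' 1) : Q = Q' := by
  rw [mem_thinF] at hQ hQ'
  exact uniq1 F (Q' 1) Q' hQ'.2.2 hQ'.1 rfl hQ.1 h

lemma thin_consec (F : Finset (Fin 2 → Fin c)) (hCP : CPhyp F) {Q Q' : Fin 2 → Fin c}
    (hQ : Q ∈ thinF F) (hQ' : Q' ∈ thinF F) (hne : Q ≠ Q') :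
    Q 1 = Q' 0 ∨ Q' 1 = Q 0 := by
  rw [mem_thinF] at hQ hQ'
  obtain ⟨hQF, hQp, hQr⟩ := hQ
  obtain ⟨hQ'F, hQ'p, hQ'r⟩ := hQ'
  by_contra hcon
  push_neg at hcon
  have key := hCP (Q 0) (Q' 1) (Q' 0) (Q 1) (fun h => hcon.2 h.symm) (fun h => hcon.1 h.symm) ?_
  · exact hne (uniq0 F (Q' 0) Q' hQ'p hQ'F rfl hQF key.1)
  · intro R hR
    have e1 : (R 0 = Q 0) ↔ (R = Q) :=
      ⟨fun h => uniq0 F (Q 0) Q hQp hQF rfl hR h, fun h => by rw [h]⟩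
    have e2 : (R 1 = Q' 1) ↔ (R = Q') :=
      ⟨fun h => uniq1 F (Q' 1) Q' hQ'r hQ'F rfl hR h, fun h => by rw [h]⟩
    have e3 : (R 0 = Q' 0) ↔ (R = Q') :=
      ⟨fun h => uniq0 F (Q' 0) Q' hQ'p hQ'F rfl hR h, fun h => by rw [h]⟩
    have e4 : (R 1 = Q 1) ↔ (R = Q) :=
      ⟨fun h => uniq1 F (Q 1) Q hQr hQF rfl hR h, fun h => by rw [h]⟩
    rw [if_congr e1 rfl rfl, if_congr e2 rfl rfl, if_congr e3 rfl rfl, if_congr e4 rfl rfl]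
    exact Nat.add_comm _ _

lemma thin_card3 (F : Finset (Fin 2 → Fin c)) (hCP : CPhyp F) : (thinF F).card ≤ 3 := by
  rcases Finset.eq_empty_or_nonempty (thinF F) with he | ⟨Q1, hQ1⟩
  · rw [he]; simp
  · have hsub : thinF F ⊆ insert Q1 (((thinF F).filter fun Q => Q 0 = Q1 1) ∪
        ((thinF F).filter fun Q => Q 1 = Q1 0)) := by
      intro Q hQ
      rw [Finset.mem_insert, Finset.mem_union, Finset.mem_filter, Finset.mem_filter]
      by_cases h : Q = Q1
      · exact Or.inl h
      · rcases thin_consec F hCP hQ hQ1 h with h' | h'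
        · exact Or.inr (Or.inr ⟨hQ, h'⟩)
        · exact Or.inr (Or.inl ⟨hQ, h'.symm⟩)
    have c1 : ((thinF F).filter fun Q => Q 0 = Q1 1).card ≤ 1 := by
      rw [Finset.card_le_one]
      intro Q hQ Q' hQ'
      rw [Finset.mem_filter] at hQ hQ'
      exact thin_tail F hQ.1 hQ'.1 (hQ.2.trans hQ'.2.symm)
    have c2 : ((thinF F).filter fun Q => Q 1 = Q1 0).card ≤ 1 := by
      rw [Finset.card_le_one]
      intro Q hQ Q' hQ'
      rw [Finset.mem_filter] at hQ hQ'
      exact thin_head F hQ.1 hQ'.1 (hQ.2.trans hQ'.2.symm)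
    calc (thinF F).card ≤ (insert Q1 (((thinF F).filter fun Q => Q 0 = Q1 1) ∪
          ((thinF F).filter fun Q => Q 1 = Q1 0))).card := Finset.card_le_card hsub
      _ ≤ (((thinF F).filter fun Q => Q 0 = Q1 1) ∪
          ((thinF F).filter fun Q => Q 1 = Q1 0)).card + 1 := Finset.card_insert_le _ _
      _ ≤ (((thinF F).filter fun Q => Q 0 = Q1 1).card +
          ((thinF F).filter fun Q => Q 1 = Q1 0).card) + 1 :=
        Nat.add_le_add_right (Finset.card_union_le _ _) _
      _ ≤ (1 + 1) + 1 := Nat.add_le_add_right (Nat.add_le_add c1 c2) _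
      _ = 3 := rfl

lemma thin_card2 (F : Finset (Fin 2 → Fin c)) (hCP : CPhyp F)
    (ha : ((Finset.univ : Finset (Fin c)).filter fun a => pdeg F a = 0).Nonempty)
    (hb : ((Finset.univ : Finset (Fin c)).filter fun b => rdeg F b = 0).Nonempty) :
    (thinF F).card ≤ 2 := by
  obtain ⟨a0, ha0⟩ := ha
  obtain ⟨x0, hx0⟩ := hb
  rw [Finset.mem_filter] at ha0 hx0
  have hpa0 := ha0.2
  have hrx0 := hx0.2
  have hcases : ∀ Q ∈ thinF F, Q 0 = x0 ∨ Q 1 = a0 := by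
    intro Q hQ
    rw [mem_thinF] at hQ
    obtain ⟨hQF, hQp, hQr⟩ := hQ
    by_contra hcon
    push_neg at hcon
    have key := hCP (Q 0) x0 a0 (Q 1) hcon.1 (fun h => hcon.2 h.symm) ?_
    · rw [key.1] at hQp
      omega
    · intro R hR
      rw [if_neg (zero1 F x0 hrx0 hR), if_neg (zero0 F a0 hpa0 hR)]
      have e1 : (R 0 = Q 0) ↔ (R = Q) :=
        ⟨fun h => uniq0 F (Q 0) Q hQp hQF rfl hR h, fun h => by rw [h]⟩
      have e2 : (R 1 = Q 1) ↔ (R = Q) :=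
        ⟨fun h => uniq1 F (Q 1) Q hQr hQF rfl hR h, fun h => by rw [h]⟩
      rw [if_congr e1 rfl rfl, if_congr e2 rfl rfl, Nat.add_zero, Nat.zero_add]
  have hsub : thinF F ⊆ ((thinF F).filter fun Q => Q 0 = x0) ∪
      ((thinF F).filter fun Q => Q 1 = a0) := by
    intro Q hQ
    rw [Finset.mem_union, Finset.mem_filter, Finset.mem_filter]
    rcases hcases Q hQ with h | h
    · exact Or.inl ⟨hQ, h⟩
    · exact Or.inr ⟨hQ, h⟩
  have c1 : ((thinF F).filter fun Q => Q 0 = x0).card ≤ 1 := by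
    rw [Finset.card_le_one]
    intro Q hQ Q' hQ'
    rw [Finset.mem_filter] at hQ hQ'
    exact thin_tail F hQ.1 hQ'.1 (hQ.2.trans hQ'.2.symm)
  have c2 : ((thinF F).filter fun Q => Q 1 = a0).card ≤ 1 := by
    rw [Finset.card_le_one]
    intro Q hQ Q' hQ'
    rw [Finset.mem_filter] at hQ hQ'
    exact thin_head F hQ.1 hQ'.1 (hQ.2.trans hQ'.2.symm)
  calc (thinF F).card ≤ (((thinF F).filter fun Q => Q 0 = x0) ∪
        ((thinF F).filter fun Q => Q 1 = a0)).card := Finset.card_le_card hsub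
    _ ≤ ((thinF F).filter fun Q => Q 0 = x0).card +
        ((thinF F).filter fun Q => Q 1 = a0).card := Finset.card_union_le _ _
    _ ≤ 1 + 1 := Nat.add_le_add c1 c2
    _ = 2 := rfl

lemma A0card (F : Finset (Fin 2 → Fin c)) (hc : 3 ≤ c) (hCP : CPhyp F) :
    ((Finset.univ : Finset (Fin c)).filter fun a => pdeg F a = 0).card ≤ 1 := by
  rw [Finset.card_le_one]
  intro a ha a' ha'
  rw [Finset.mem_filter] at ha ha'
  have hpa := ha.2
  have hpa' := ha'.2
  have hex : 0 < ((Finset.univ : Finset (Fin c)) \ {a, a'}).card := by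
    have h2 : ({a, a'} : Finset (Fin c)).card ≤ 2 :=
      le_trans (Finset.card_insert_le _ _) (by simp)
    rw [Finset.card_sdiff_of_subset (Finset.subset_univ _), Finset.card_univ, Fintype.card_fin]
    omega
  obtain ⟨x, hx⟩ := Finset.card_pos.mp hex
  rw [Finset.mem_sdiff, Finset.mem_insert, Finset.mem_singleton] at hx
  obtain ⟨-, hx2⟩ := hx
  push_neg at hx2
  exact (hCP a x a' x (Ne.symm hx2.1) (Ne.symm hx2.2) (by
    intro Q hQ
    rw [if_neg (zero0 F a hpa hQ), if_neg (zero0 F a' hpa' hQ)])).1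

lemma B0card (F : Finset (Fin 2 → Fin c)) (hc : 3 ≤ c) (hCP : CPhyp F) :
    ((Finset.univ : Finset (Fin c)).filter fun b => rdeg F b = 0).card ≤ 1 := by
  rw [Finset.card_le_one]
  intro b hb b' hb'
  rw [Finset.mem_filter] at hb hb'
  have hrb := hb.2
  have hrb' := hb'.2
  have hex : 0 < ((Finset.univ : Finset (Fin c)) \ {b, b'}).card := by
    have h2 : ({b, b'} : Finset (Fin c)).card ≤ 2 :=
      le_trans (Finset.card_insert_le _ _) (by simp)
    rw [Finset.card_sdiff_of_subset (Finset.subset_univ _), Finset.card_univ, Fintype.card_fin]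
    omega
  obtain ⟨x, hx⟩ := Finset.card_pos.mp hex
  rw [Finset.mem_sdiff, Finset.mem_insert, Finset.mem_singleton] at hx
  obtain ⟨-, hx2⟩ := hx
  push_neg at hx2
  exact (hCP x b x b' hx2.1 hx2.2 (by
    intro Q hQ
    rw [if_neg (zero1 F b hrb hQ), if_neg (zero1 F b' hrb' hQ)])).2

lemma eta1 (F : Finset (Fin 2 → Fin c)) :
    2 * c ≤ F.card + 2 * ((Finset.univ : Finset (Fin c)).filter fun b => rdeg F b = 0).card +
      ((Finset.univ : Finset (Fin c)).filter fun b => rdeg F b = 1).card := by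
  have hpt : ∀ b ∈ (Finset.univ : Finset (Fin c)),
      2 ≤ rdeg F b + (2 * (if rdeg F b = 0 then 1 else 0) + (if rdeg F b = 1 then 1 else 0)) := by
    intro b _
    split_ifs <;> omega
  have hs := Finset.sum_le_sum hpt
  rw [Finset.sum_const, Finset.card_univ, Fintype.card_fin, smul_eq_mul] at hs
  rw [Finset.sum_add_distrib, Finset.sum_add_distrib, ← Finset.mul_sum,
    Finset.sum_boole, Finset.sum_boole, sum_rdeg] at hs
  simp only [Nat.cast_id] at hs
  linarith

lemma eta2 (F : Finset (Fin 2 → Fin c)) :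
    2 * c + ((Finset.univ : Finset (Fin c)).filter fun b => rdeg F b = 1).card ≤
      2 * F.card + 2 * ((Finset.univ : Finset (Fin c)).filter fun a => pdeg F a = 0).card +
        (thinF F).card := by
  classical
  set G' := (F.filter fun Q => rdeg F (Q 1) = 1) \ thinF F with hG'
  have hstep1 : ((Finset.univ : Finset (Fin c)).filter fun b => rdeg F b = 1).card ≤
      G'.card + (thinF F).card := by
    have hfib : (F.filter fun Q => rdeg F (Q 1) = 1).card =
        ∑ b, ((F.filter fun Q => rdeg F (Q 1) = 1).filter fun Q => Q 1 = b).card :=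
      Finset.card_eq_sum_card_fiberwise fun Q _ => Finset.mem_univ _
    have hfib2 : ∀ b ∈ (Finset.univ : Finset (Fin c)),
        ((F.filter fun Q => rdeg F (Q 1) = 1).filter fun Q => Q 1 = b).card =
          if rdeg F b = 1 then 1 else 0 := by
      intro b _
      rw [Finset.filter_filter]
      by_cases hb : rdeg F b = 1
      · rw [if_pos hb]
        have he : (F.filter fun Q => rdeg F (Q 1) = 1 ∧ Q 1 = b) =
            F.filter fun Q => Q 1 = b := by
          ext Q
          simp only [Finset.mem_filter]
          constructor
          · rintro ⟨h, -, h2⟩; exact ⟨h, h2⟩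
          · rintro ⟨h, h2⟩; exact ⟨h, h2 ▸ hb, h2⟩
        rw [he]
        exact hb
      · rw [if_neg hb, Finset.card_eq_zero, Finset.eq_empty_iff_forall_notMem]
        intro Q hQ
        rw [Finset.mem_filter] at hQ
        exact hb (hQ.2.2 ▸ hQ.2.1)
    have htot : (F.filter fun Q => rdeg F (Q 1) = 1).card =
        ((Finset.univ : Finset (Fin c)).filter fun b => rdeg F b = 1).card := by
      rw [hfib, Finset.sum_congr rfl hfib2, Finset.sum_boole, Nat.cast_id]
    have hsub : (F.filter fun Q => rdeg F (Q 1) = 1) ⊆ G' ∪ thinF F := by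
      intro Q hQ
      rw [Finset.mem_union, hG', Finset.mem_sdiff]
      by_cases h : Q ∈ thinF F
      · exact Or.inr h
      · exact Or.inl ⟨hQ, h⟩
    calc ((Finset.univ : Finset (Fin c)).filter fun b => rdeg F b = 1).card
        = (F.filter fun Q => rdeg F (Q 1) = 1).card := htot.symm
      _ ≤ (G' ∪ thinF F).card := Finset.card_le_card hsub
      _ ≤ G'.card + (thinF F).card := Finset.card_union_le _ _
  have hkle : ∀ u : Fin c, (G'.filter fun Q => Q 0 = u).card ≤ pdeg F u := by
    intro u
    apply Finset.card_le_card
    intro Q hQ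
    rw [Finset.mem_filter] at hQ
    have hQF : Q ∈ F := by
      have := hQ.1
      rw [hG', Finset.mem_sdiff, Finset.mem_filter] at this
      exact this.1.1
    exact Finset.mem_filter.mpr ⟨hQF, hQ.2⟩
  have hkpos : ∀ u : Fin c, 0 < (G'.filter fun Q => Q 0 = u).card → 2 ≤ pdeg F u := by
    intro u hu
    obtain ⟨Q, hQ⟩ := Finset.card_pos.mp hu
    rw [Finset.mem_filter] at hQ
    obtain ⟨hQG', hQu⟩ := hQ
    rw [hG', Finset.mem_sdiff, Finset.mem_filter] at hQG'
    obtain ⟨⟨hQF, hQr⟩, hQnt⟩ := hQG'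
    have h1 : 1 ≤ pdeg F (Q 0) := pos0 F hQF
    have h2 : pdeg F (Q 0) ≠ 1 := fun h => hQnt (mem_thinF.mpr ⟨hQF, h, hQr⟩)
    rw [hQu] at h1 h2
    rcases Nat.eq_or_lt_of_le h1 with h | h
    · exact absurd h.symm h2
    · exact h
  have hmain : 2 * (∑ u, min (pdeg F u) 1) + G'.card ≤ 2 * F.card := by
    have hpt : ∀ u ∈ (Finset.univ : Finset (Fin c)),
        2 * min (pdeg F u) 1 + (G'.filter fun Q => Q 0 = u).card ≤ 2 * pdeg F u := by
      intro u _
      have h1 := hkle u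
      rcases Nat.eq_zero_or_pos ((G'.filter fun Q => Q 0 = u).card) with h | h
      · have h2 : min (pdeg F u) 1 ≤ pdeg F u := Nat.min_le_left _ _
        rw [h]
        linarith
      · have h2 := hkpos u h
        have h3 : min (pdeg F u) 1 ≤ 1 := Nat.min_le_right _ _
        linarith
    have hs := Finset.sum_le_sum hpt
    rw [Finset.sum_add_distrib, ← Finset.mul_sum, ← Finset.mul_sum] at hs
    have hgs : ∑ u, (G'.filter fun Q => Q 0 = u).card = G'.card :=
      (Finset.card_eq_sum_card_fiberwise fun Q _ => Finset.mem_univ (Q 0)).symm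
    rw [hgs, sum_pdeg] at hs
    exact hs
  have hMA : ((Finset.univ : Finset (Fin c)).filter fun a => pdeg F a = 0).card +
      (∑ u, min (pdeg F u) 1) = c := by
    have h1 : ∀ u ∈ (Finset.univ : Finset (Fin c)),
        min (pdeg F u) 1 = if pdeg F u = 0 then 0 else 1 := by
      intro u _
      by_cases h : pdeg F u = 0
      · simp [h]
      · rw [if_neg h, min_eq_right (Nat.one_le_iff_ne_zero.mpr h)]
    rw [Finset.sum_congr rfl h1]
    have h2 : ∑ u : Fin c, (if pdeg F u = 0 then 0 else 1) =
        ∑ u : Fin c, (if ¬ pdeg F u = 0 then 1 else 0) := by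
      apply Finset.sum_congr rfl
      intro u _
      by_cases h : pdeg F u = 0 <;> simp [h]
    rw [h2, Finset.sum_boole, Nat.cast_id]
    have h3 := Finset.card_filter_add_card_filter_not
      (s := (Finset.univ : Finset (Fin c))) (p := fun u => pdeg F u = 0)
    simpa using h3
  linarith

lemma main_bound (F : Finset (Fin 2 → Fin c)) (hc : 3 ≤ c) (hCP : CPhyp F) :
    4 * c ≤ 3 * F.card + 6 := by
  have key : ∃ α β ρ θ : ℕ,
      (2 * c ≤ F.card + 2 * β + ρ) ∧
      (2 * c + ρ ≤ 2 * F.card + 2 * α + θ) ∧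
      α ≤ 1 ∧ β ≤ 1 ∧ θ ≤ 3 ∧ (1 ≤ α → 1 ≤ β → θ ≤ 2) := by
    refine ⟨_, _, _, _, eta1 F, eta2 F, A0card F hc hCP, B0card F hc hCP,
      thin_card3 F hCP, ?_⟩
    intro hα hβ
    exact thin_card2 F hCP (Finset.card_pos.mp hα) (Finset.card_pos.mp hβ)
  obtain ⟨α, β, ρ, θ, h1, h2, hA, hB, h3, h4⟩ := key
  by_cases hα : 1 ≤ α
  · by_cases hβ : 1 ≤ β
    · have h5 := h4 hα hβ
      omega
    · omega
  · omega

end ABGame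

theorem statement1 (c : ℕ) (hc : 2 ≤ c) (qs : List (Fin 2 → Fin c))
    (hqs : Feasible qs) : (4 * c + 2) / 3 - 2 ≤ qs.length := by
  classical
  obtain ⟨hnd, -, hfeas⟩ := hqs
  have CP : ABGame.CPhyp qs.toFinset := by
    intro a b a' b' hab hab' h
    have hS : ![a, b] = ![a', b'] := by
      apply hfeas _ _ (ABGame.inj_pair hab) (ABGame.inj_pair hab')
      apply List.map_congr_left
      intro Q hQ
      rw [ABGame.answer_pair, ABGame.answer_pair]
      exact h Q (List.mem_toFinset.mpr hQ)
    exact ⟨by simpa using congrFun hS 0, by simpa using congrFun hS 1⟩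
  have hcard : qs.toFinset.card = qs.length := List.toFinset_card_of_nodup hnd
  rcases eq_or_lt_of_le hc with hc2 | hc3
  · -- c = 2
    subst hc2
    have hlen : qs ≠ [] := by
      intro h0
      have := CP 0 1 1 0 (by decide) (by decide) (by
        intro Q hQ
        rw [h0] at hQ
        simp at hQ)
      exact absurd this.1 (by decide)
    have : 0 < qs.length := List.length_pos_iff.mpr hlen
    omega
  · have hmain := ABGame.main_bound qs.toFinset (by omega) CP
    omega
end

section
/- For the Static Black-Peg AB Game with 2 pegs and c ≥ 2 colors: in every feasible strategy, for each peg i ∈ {0, 1} there is at most one color of Fin c that does not occur on peg i in any question of the strategy. -/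
lemma aux_inj {c : ℕ} (i : Fin 2) (a b : Fin c) (hab : a ≠ b) :
    Function.Injective (fun k : Fin 2 => if k = i then a else b) := by
  intro x y h
  simp only at h
  by_cases hx : x = i <;> by_cases hy : y = i
  · rw [hx, hy]
  · rw [if_pos hx, if_neg hy] at h; exact absurd h hab
  · rw [if_neg hx, if_pos hy] at h; exact absurd h.symm hab
  · have key : ∀ x y i : Fin 2, x ≠ i → y ≠ i → x = y := by decide
    exact key x y i hx hy

theorem statement4 (c : ℕ) (hc : 2 ≤ c) (qs : List (Fin 2 → Fin c))
    (hqs : Feasible qs) (i : Fin 2) :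
    ({q : Fin c | ∀ Q ∈ qs, Q i ≠ q}).Subsingleton := by
  intro q hq q' hq'
  simp only [Set.mem_setOf_eq] at hq hq'
  by_contra hne
  obtain ⟨hnd, hinj, hfeas⟩ := hqs
  by_cases hr : ∃ r : Fin c, r ≠ q ∧ r ≠ q'
  · obtain ⟨r, hrq, hrq'⟩ := hr
    set S : Fin 2 → Fin c := fun k => if k = i then q else r with hS
    set S' : Fin 2 → Fin c := fun k => if k = i then q' else r with hS'
    have hSinj : Function.Injective S := aux_inj i q r (Ne.symm hrq)
    have hS'inj : Function.Injective S' := aux_inj i q' r (Ne.symm hrq')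
    have hmap : qs.map (fun Q => answer Q S) = qs.map (fun Q => answer Q S') := by
      apply List.map_congr_left
      intro Q hQ
      unfold answer
      congr 1
      apply Finset.filter_congr
      intro k _
      by_cases hk : k = i
      · subst hk
        simp only [hS, hS', if_pos rfl]
        exact iff_of_false (hq Q hQ) (hq' Q hQ)
      · simp [hS, hS', hk]
    have hSS := hfeas S S' hSinj hS'inj hmap
    have := congrFun hSS i
    simp only [hS, hS', if_pos rfl] at this
    exact hne this
  · push_neg at hr
    match qs, hfeas with
    | [], hfeas =>
      set T : Fin 2 → Fin c := fun k => if k = i then q else q' with hT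
      set T' : Fin 2 → Fin c := fun k => if k = i then q' else q with hT'
      have hTinj : Function.Injective T := aux_inj i q q' hne
      have hT'inj : Function.Injective T' := aux_inj i q' q (Ne.symm hne)
      have hTT := hfeas T T' hTinj hT'inj rfl
      have := congrFun hTT i
      simp only [hT, hT', if_pos rfl] at this
      exact hne this
    | Q :: rest, _ =>
      have hQ : Q ∈ Q :: rest := List.mem_cons_self
      exact hq' Q hQ (hr (Q i) (hq Q hQ))
end

section
/- For the Static Black-Peg AB Game with 2 pegs and c ≥ 2 colors: a feasible strategy cannot contain two (1,1)-questions that are disjoint (share no color). -/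
lemma countP_one_unique {α} {l : List α} {p : α → Bool} (hp : l.countP p = 1)
    {a b : α} (ha : a ∈ l) (hb : b ∈ l) (hpa : p a) (hpb : p b) : a = b := by
  have hl : (l.filter p).length = 1 := by rw [← List.countP_eq_length_filter]; exact hp
  obtain ⟨x, hx⟩ := List.length_eq_one_iff.mp hl
  have ha' : a ∈ l.filter p := List.mem_filter.mpr ⟨ha, hpa⟩
  have hb' : b ∈ l.filter p := List.mem_filter.mpr ⟨hb, hpb⟩
  rw [hx, List.mem_singleton] at ha' hb'
  rw [ha', hb']

lemma answer_fin2 {c : ℕ} (Q S : Fin 2 → Fin c) :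
    answer Q S = (if Q 0 = S 0 then 1 else 0) + (if Q 1 = S 1 then 1 else 0) := by
  unfold answer
  rw [Finset.card_filter, Fin.sum_univ_two]

lemma fin2_inj {c : ℕ} (f : Fin 2 → Fin c) (h : f 0 ≠ f 1) : Function.Injective f := by
  intro a b hab
  fin_cases a <;> fin_cases b <;> simp_all

theorem statement5 (c : ℕ) (hc : 2 ≤ c) (qs : List (Fin 2 → Fin c))
    (hqs : Feasible qs) :
    ¬ ∃ Q Q' : Fin 2 → Fin c, Q ∈ qs ∧ Q' ∈ qs ∧
      (occ qs 0 (Q 0) = 1 ∧ occ qs 1 (Q 1) = 1) ∧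
      (occ qs 0 (Q' 0) = 1 ∧ occ qs 1 (Q' 1) = 1) ∧
      (∀ i j : Fin 2, Q i ≠ Q' j) := by
  rintro ⟨Q, Q', hQ, hQ', ⟨h00, h01⟩, ⟨h10, h11⟩, hdisj⟩
  obtain ⟨hnd, hinj, hfeas⟩ := hqs
  -- uniqueness helpers
  have uniq : ∀ (i : Fin 2) (R T : Fin 2 → Fin c), occ qs i (T i) = 1 → T ∈ qs → R ∈ qs →
      R i = T i → R = T := by
    intro i R T hocc hT hR hri
    exact countP_one_unique hocc hR hT (by simp [hri]) (by simp)
  set S : Fin 2 → Fin c := ![Q 0, Q' 1] with hS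
  set S' : Fin 2 → Fin c := ![Q' 0, Q 1] with hS'
  have hSi : Function.Injective S := fin2_inj _ (by simpa [hS] using (hdisj 0 1))
  have hS'i : Function.Injective S' := fin2_inj _ (by simpa [hS'] using (hdisj 1 0).symm)
  have hmap : qs.map (fun R => answer R S) = qs.map (fun R => answer R S') := by
    apply List.map_congr_left
    intro R hR
    rw [answer_fin2, answer_fin2]
    simp only [hS, hS', Matrix.cons_val_zero, Matrix.cons_val_one, Matrix.head_cons]
    by_cases hRQ : R = Q
    · subst hRQ
      rw [if_pos rfl, if_neg (hdisj 1 1), if_neg (hdisj 0 0), if_pos rfl]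
    by_cases hRQ' : R = Q'
    · subst hRQ'
      rw [if_neg (fun h => hdisj 0 0 h.symm), if_pos rfl, if_pos rfl,
        if_neg (fun h => hdisj 1 1 h.symm)]
    have n1 : R 0 ≠ Q 0 := fun h => hRQ (uniq 0 R Q h00 hQ hR h)
    have n2 : R 1 ≠ Q 1 := fun h => hRQ (uniq 1 R Q h01 hQ hR h)
    have n3 : R 0 ≠ Q' 0 := fun h => hRQ' (uniq 0 R Q' h10 hQ' hR h)
    have n4 : R 1 ≠ Q' 1 := fun h => hRQ' (uniq 1 R Q' h11 hQ' hR h)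
    rw [if_neg n1, if_neg n4, if_neg n3, if_neg n2]
  have := hfeas S S' hSi hS'i hmap
  have : S 0 = S' 0 := by rw [this]
  simp only [hS, hS', Matrix.cons_val_zero] at this
  exact hdisj 0 0 this
end

section
/- For the Static Black-Peg AB Game with 2 pegs and c ≥ 2 colors: if a feasible strategy contains three (1,1)-questions, then there exist pairwise distinct colors a, b, d such that, after a suitable reordering, the three questions are (a | b), (b | d), (d | a). -/
lemma answer_eq {c : ℕ} (R S : Fin 2 → Fin c) :
    answer R S = (if R 0 = S 0 then 1 else 0) + (if R 1 = S 1 then 1 else 0) := by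
  unfold answer
  rw [Finset.card_filter, Fin.sum_univ_two]

lemma occ_one_unique {c : ℕ} {qs : List (Fin 2 → Fin c)} (hnd : qs.Nodup)
    {i : Fin 2} {q : Fin c} (h : occ qs i q = 1) {Q R : Fin 2 → Fin c}
    (hQ : Q ∈ qs) (hQi : Q i = q) (hR : R ∈ qs) (hRi : R i = q) : R = Q := by
  by_contra hne
  have hQf : Q ∈ qs.filter (fun Q => decide (Q i = q)) := by
    simp only [List.mem_filter, decide_eq_true_eq]
    exact ⟨hQ, hQi⟩
  have hRf : R ∈ qs.filter (fun Q => decide (Q i = q)) := by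
    simp only [List.mem_filter, decide_eq_true_eq]
    exact ⟨hR, hRi⟩
  have hndf := hnd.filter (fun Q => decide (Q i = q))
  have h2 : 2 ≤ (qs.filter (fun Q => decide (Q i = q))).length := by
    have hsub : ({Q, R} : Finset (Fin 2 → Fin c)) ⊆
        (qs.filter (fun Q => decide (Q i = q))).toFinset := by
      intro x hx
      simp only [Finset.mem_insert, Finset.mem_singleton] at hx
      rcases hx with rfl | rfl
      · exact List.mem_toFinset.2 hQf
      · exact List.mem_toFinset.2 hRf
    calc 2 = ({Q, R} : Finset (Fin 2 → Fin c)).card := (Finset.card_pair (Ne.symm hne)).symm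
      _ ≤ _ := Finset.card_le_card hsub
      _ ≤ _ := List.toFinset_card_le _
  have h' : qs.countP (fun Q => decide (Q i = q)) = 1 := h
  rw [List.countP_eq_length_filter] at h'
  rw [h'] at h2
  exact absurd h2 (by norm_num)

lemma inj_pair {c : ℕ} {x y : Fin c} (h : x ≠ y) : Function.Injective ![x, y] := by
  intro i j hij
  fin_cases i <;> fin_cases j <;> simp_all

lemma eta2 {c : ℕ} (R : Fin 2 → Fin c) : R = ![R 0, R 1] := by
  funext i; fin_cases i <;> simp

lemma swap {c : ℕ} {qs : List (Fin 2 → Fin c)} (hqs : Feasible qs)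
    {Q Q' : Fin 2 → Fin c} (hQ : Q ∈ qs) (hQ' : Q' ∈ qs) (hne : Q ≠ Q')
    (o : occ qs 0 (Q 0) = 1 ∧ occ qs 1 (Q 1) = 1)
    (o' : occ qs 0 (Q' 0) = 1 ∧ occ qs 1 (Q' 1) = 1)
    (hiQ : Q 0 ≠ Q 1) (hiQ' : Q' 0 ≠ Q' 1) :
    Q 0 = Q' 1 ∨ Q' 0 = Q 1 := by
  obtain ⟨hnd, hinj, hfeas⟩ := hqs
  have ha : Q 0 ≠ Q' 0 := fun e => hne (occ_one_unique hnd o'.1 hQ' rfl hQ e)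
  have hb : Q 1 ≠ Q' 1 := fun e => hne (occ_one_unique hnd o'.2 hQ' rfl hQ e)
  by_contra hcon
  push_neg at hcon
  obtain ⟨h1, h2⟩ := hcon
  set S : Fin 2 → Fin c := ![Q 0, Q' 1] with hS
  set S' : Fin 2 → Fin c := ![Q' 0, Q 1] with hS'
  have hSeq : S = S' := by
    apply hfeas S S' (inj_pair h1) (inj_pair h2)
    apply List.map_congr_left
    intro R hR
    rw [answer_eq, answer_eq]
    have hS0 : S 0 = Q 0 := rfl
    have hS1 : S 1 = Q' 1 := rfl
    have hS'0 : S' 0 = Q' 0 := rfl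
    have hS'1 : S' 1 = Q 1 := rfl
    rw [hS0, hS1, hS'0, hS'1]
    by_cases hRQ : R = Q
    · subst hRQ; simp [hb, ha]
    · by_cases hRQ' : R = Q'
      · subst hRQ'; simp [ha.symm, hb.symm]
      · have r1 : R 0 ≠ Q 0 := fun e => hRQ (occ_one_unique hnd o.1 hQ rfl hR e)
        have r2 : R 0 ≠ Q' 0 := fun e => hRQ' (occ_one_unique hnd o'.1 hQ' rfl hR e)
        have r3 : R 1 ≠ Q 1 := fun e => hRQ (occ_one_unique hnd o.2 hQ rfl hR e)
        have r4 : R 1 ≠ Q' 1 := fun e => hRQ' (occ_one_unique hnd o'.2 hQ' rfl hR e)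
        simp [r1, r2, r3, r4]
  have : S 0 = S' 0 := by rw [hSeq]
  exact ha this

theorem statement6 (c : ℕ) (hc : 2 ≤ c) (qs : List (Fin 2 → Fin c))
    (hqs : Feasible qs) (Q₁ Q₂ Q₃ : Fin 2 → Fin c)
    (h₁ : Q₁ ∈ qs) (h₂ : Q₂ ∈ qs) (h₃ : Q₃ ∈ qs)
    (hne12 : Q₁ ≠ Q₂) (hne13 : Q₁ ≠ Q₃) (hne23 : Q₂ ≠ Q₃)
    (o₁ : occ qs 0 (Q₁ 0) = 1 ∧ occ qs 1 (Q₁ 1) = 1)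
    (o₂ : occ qs 0 (Q₂ 0) = 1 ∧ occ qs 1 (Q₂ 1) = 1)
    (o₃ : occ qs 0 (Q₃ 0) = 1 ∧ occ qs 1 (Q₃ 1) = 1) :
    ∃ a b d : Fin c, a ≠ b ∧ a ≠ d ∧ b ≠ d ∧
      ({Q₁, Q₂, Q₃} : Set (Fin 2 → Fin c)) = {![a, b], ![b, d], ![d, a]} := by
  have hnd := hqs.1
  have i1 : Q₁ 0 ≠ Q₁ 1 := fun e => absurd (hqs.2.1 Q₁ h₁ e) (by decide)
  have i2 : Q₂ 0 ≠ Q₂ 1 := fun e => absurd (hqs.2.1 Q₂ h₂ e) (by decide)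
  have i3 : Q₃ 0 ≠ Q₃ 1 := fun e => absurd (hqs.2.1 Q₃ h₃ e) (by decide)
  have ha12 : Q₁ 0 ≠ Q₂ 0 := fun e => hne12 (occ_one_unique hnd o₂.1 h₂ rfl h₁ e)
  have ha13 : Q₁ 0 ≠ Q₃ 0 := fun e => hne13 (occ_one_unique hnd o₃.1 h₃ rfl h₁ e)
  have ha23 : Q₂ 0 ≠ Q₃ 0 := fun e => hne23 (occ_one_unique hnd o₃.1 h₃ rfl h₂ e)
  have hb12 : Q₁ 1 ≠ Q₂ 1 := fun e => hne12 (occ_one_unique hnd o₂.2 h₂ rfl h₁ e)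
  have hb13 : Q₁ 1 ≠ Q₃ 1 := fun e => hne13 (occ_one_unique hnd o₃.2 h₃ rfl h₁ e)
  have hb23 : Q₂ 1 ≠ Q₃ 1 := fun e => hne23 (occ_one_unique hnd o₃.2 h₃ rfl h₂ e)
  have s12 := swap hqs h₁ h₂ hne12 o₁ o₂ i1 i2
  have s13 := swap hqs h₁ h₃ hne13 o₁ o₃ i1 i3
  have s23 := swap hqs h₂ h₃ hne23 o₂ o₃ i2 i3
  rcases s12 with h12 | h12 <;> rcases s13 with h13 | h13 <;>
    rcases s23 with h23 | h23
  · -- a₁=b₂, a₁=b₃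
    exact absurd (h12.symm.trans h13) hb23
  · exact absurd (h12.symm.trans h13) hb23
  · -- a₁=b₂, a₃=b₁, a₂=b₃ : cycle 1→2→3→1
    refine ⟨Q₁ 0, Q₃ 0, Q₂ 0, ha13, ha12, fun e => ha23 e.symm, ?_⟩
    have e1 : Q₁ = ![Q₁ 0, Q₃ 0] := by rw [h13]; exact eta2 Q₁
    have e2 : Q₂ = ![Q₂ 0, Q₁ 0] := by rw [h12]; exact eta2 Q₂
    have e3 : Q₃ = ![Q₃ 0, Q₂ 0] := by rw [h23]; exact eta2 Q₃
    rw [e1, e2, e3]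
    simp only [Matrix.cons_val_zero]
    ext x
    simp only [Set.mem_insert_iff, Set.mem_singleton_iff]
    tauto
  · -- a₁=b₂, a₃=b₁, a₃=b₂
    exact absurd (h13.symm.trans h23) hb12
  · -- a₂=b₁, a₁=b₃, a₂=b₃
    exact absurd (h13.trans h23.symm) ha12
  · -- a₂=b₁, a₁=b₃, a₃=b₂ : cycle 1→3→2→1
    refine ⟨Q₁ 0, Q₂ 0, Q₃ 0, ha12, ha13, ha23, ?_⟩
    have e1 : Q₁ = ![Q₁ 0, Q₂ 0] := by rw [h12]; exact eta2 Q₁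
    have e2 : Q₂ = ![Q₂ 0, Q₃ 0] := by rw [h23]; exact eta2 Q₂
    have e3 : Q₃ = ![Q₃ 0, Q₁ 0] := by rw [h13]; exact eta2 Q₃
    rw [e1, e2, e3]
    simp
  · exact absurd (h12.trans h13.symm) ha23
  · exact absurd (h12.trans h13.symm) ha23
end

section
/- For the Static Black-Peg AB Game with 3 pegs and c ≥ 5 colors: in every feasible strategy, for each peg i ∈ {0, 1, 2} there is at most one color of Fin c that does not occur on peg i in any question of the strategy. -/
lemma inj3 {c : ℕ} {x y z : Fin c} (hxy : x ≠ y) (hxz : x ≠ z) (hyz : y ≠ z) :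
    Function.Injective ![x, y, z] := by
  intro a b h
  fin_cases a <;> fin_cases b <;> simp_all

lemma sub_inj3 (i : Fin 3) : Function.Injective (fun j : Fin 3 => j - i) := by
  intro x y h
  simpa using congrArg (· + i) h

theorem statement9 (c : ℕ) (hc : 5 ≤ c) (qs : List (Fin 3 → Fin c))
    (hqs : Feasible qs) (i : Fin 3) :
    ({q : Fin c | ∀ Q ∈ qs, Q i ≠ q}).Subsingleton := by
  intro q hq q' hq'
  by_contra hne
  -- pick a ≠ b both different from q and q'
  have hcard : 1 < (Finset.univ \ {q, q'} : Finset (Fin c)).card := by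
    have : ({q, q'} : Finset (Fin c)).card ≤ 2 := Finset.card_insert_le _ _ |>.trans (by simp)
    have h1 : (Finset.univ \ {q, q'} : Finset (Fin c)).card ≥ c - 2 := by
      have := Finset.le_card_sdiff ({q, q'} : Finset (Fin c)) Finset.univ
      simp only [Finset.card_univ, Fintype.card_fin] at this ⊢
      omega
    omega
  obtain ⟨a, ha, b, hb, hab⟩ := Finset.one_lt_card.mp hcard
  simp only [Finset.mem_sdiff, Finset.mem_insert, Finset.mem_singleton, not_or] at ha hb
  set S : Fin 3 → Fin c := fun j => ![q, a, b] (j - i) with hS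
  set S' : Fin 3 → Fin c := fun j => ![q', a, b] (j - i) with hS'
  have hSi : S i = q := by simp [hS]
  have hS'i : S' i = q' := by simp [hS']
  have hinjS : Function.Injective S :=
    (inj3 (Ne.symm ha.2.1) (Ne.symm hb.2.1) hab).comp (sub_inj3 i)
  have hinjS' : Function.Injective S' :=
    (inj3 (Ne.symm ha.2.2) (Ne.symm hb.2.2) hab).comp (sub_inj3 i)
  obtain ⟨-, -, hfeas⟩ := hqs
  have heq : S = S' := by
    apply hfeas S S' hinjS hinjS'
    apply List.map_congr_left
    intro Q hQ
    unfold answer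
    congr 1
    apply Finset.filter_congr
    intro j _
    by_cases hj : j = i
    · subst hj
      simp only [hSi, hS'i]
      constructor
      · intro h; exact absurd h (hq.out Q hQ)
      · intro h; exact absurd h (hq'.out Q hQ)
    · have hji : j - i ≠ 0 := by
        intro h; apply hj; simpa using congrArg (· + i) h
      have key : ∀ k : Fin 3, k ≠ 0 → ![q, a, b] k = ![q', a, b] k := by
        intro k hk; fin_cases k <;> simp_all
      have : S j = S' j := key _ hji
      rw [this]
  apply hne
  rw [← hSi, ← hS'i, heq]
end

section
/- For the Static Black-Peg AB Game with 3 pegs and c ≥ 5 colors: a feasible strategy cannot contain two (1,1,⋆)-questions Q, Q' that are disjoint in the first two pegs, i.e., with {Q 0, Q 1} ∩ {Q' 0, Q' 1} = ∅. -/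
lemma countP_one_unique_s10 {α : Type*} {l : List α} {p : α → Bool} (h : l.countP p = 1)
    {x : α} (hx : x ∈ l) (hpx : p x = true) {y : α} (hy : y ∈ l) (hpy : p y = true) :
    y = x := by
  have hfx : x ∈ l.filter p := List.mem_filter.2 ⟨hx, hpx⟩
  have hfy : y ∈ l.filter p := List.mem_filter.2 ⟨hy, hpy⟩
  rw [List.countP_eq_length_filter] at h
  obtain ⟨w, hw⟩ := List.length_eq_one_iff.1 h
  rw [hw, List.mem_singleton] at hfx hfy
  rw [hfy, hfx]

lemma inj3_s10 {c : ℕ} {x y w : Fin c} (hxy : x ≠ y) (hxw : x ≠ w) (hyw : y ≠ w) :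
    Function.Injective (fun i : Fin 3 => if i = 0 then x else if i = 1 then y else w) := by
  intro i j h
  fin_cases i <;> fin_cases j <;> simp_all

theorem statement10 (c : ℕ) (hc : 5 ≤ c) (qs : List (Fin 3 → Fin c))
    (hqs : Feasible qs) :
    ¬ ∃ Q Q' : Fin 3 → Fin c, Q ∈ qs ∧ Q' ∈ qs ∧
      (occ qs 0 (Q 0) = 1 ∧ occ qs 1 (Q 1) = 1) ∧
      (occ qs 0 (Q' 0) = 1 ∧ occ qs 1 (Q' 1) = 1) ∧
      ({Q 0, Q 1} ∩ {Q' 0, Q' 1} : Set (Fin c)) = ∅ := by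
  rintro ⟨Q, Q', hQ, hQ', ⟨h0, h1⟩, ⟨h0', h1'⟩, hdisj⟩
  obtain ⟨hnd, hinj, hfeas⟩ := hqs
  have hne : ∀ x ∈ ({Q 0, Q 1} : Set (Fin c)), x ∉ ({Q' 0, Q' 1} : Set (Fin c)) := by
    intro x hx hx'
    have : x ∈ ({Q 0, Q 1} ∩ {Q' 0, Q' 1} : Set (Fin c)) := ⟨hx, hx'⟩
    rw [hdisj] at this; exact this
  have haa' : Q 0 ≠ Q' 0 := fun h => hne _ (Or.inl rfl) (Or.inl h)
  have hab' : Q 0 ≠ Q' 1 := fun h => hne _ (Or.inl rfl) (Or.inr h)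
  have hba' : Q 1 ≠ Q' 0 := fun h => hne _ (Or.inr rfl) (Or.inl h)
  have hbb' : Q 1 ≠ Q' 1 := fun h => hne _ (Or.inr rfl) (Or.inr h)
  have hab : Q 0 ≠ Q 1 := fun h => absurd (hinj Q hQ h) (by decide)
  have ha'b' : Q' 0 ≠ Q' 1 := fun h => absurd (hinj Q' hQ' h) (by decide)
  unfold occ at h0 h1 h0' h1'
  have u0 : ∀ R ∈ qs, R 0 = Q 0 → R = Q := fun R hR h =>
    countP_one_unique_s10 h0 hQ (by simp) hR (by simp [h])
  have u1 : ∀ R ∈ qs, R 1 = Q 1 → R = Q := fun R hR h =>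
    countP_one_unique_s10 h1 hQ (by simp) hR (by simp [h])
  have u0' : ∀ R ∈ qs, R 0 = Q' 0 → R = Q' := fun R hR h =>
    countP_one_unique_s10 h0' hQ' (by simp) hR (by simp [h])
  have u1' : ∀ R ∈ qs, R 1 = Q' 1 → R = Q' := fun R hR h =>
    countP_one_unique_s10 h1' hQ' (by simp) hR (by simp [h])
  have hz : ∃ z : Fin c, z ∉ ({Q 0, Q 1, Q' 0, Q' 1} : Finset (Fin c)) := by
    by_contra h
    push_neg at h
    have hsub : (Finset.univ : Finset (Fin c)) ⊆ {Q 0, Q 1, Q' 0, Q' 1} := by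
      intro u _; exact h u
    have hle := Finset.card_le_card hsub
    have c1 := Finset.card_insert_le (Q 0) ({Q 1, Q' 0, Q' 1} : Finset (Fin c))
    have c2 := Finset.card_insert_le (Q 1) ({Q' 0, Q' 1} : Finset (Fin c))
    have c3 := Finset.card_insert_le (Q' 0) ({Q' 1} : Finset (Fin c))
    have c4 : ({Q' 1} : Finset (Fin c)).card = 1 := Finset.card_singleton _
    rw [Finset.card_univ, Fintype.card_fin] at hle
    clear * - hle c1 c2 c3 c4 hc
    omega
  obtain ⟨z, hzmem⟩ := hz
  simp only [Finset.mem_insert, Finset.mem_singleton, not_or] at hzmem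
  obtain ⟨hza, hzb, hza', hzb'⟩ := hzmem
  have hSinj : Function.Injective
      (fun i : Fin 3 => if i = 0 then Q 0 else if i = 1 then Q' 1 else z) :=
    inj3_s10 hab' (Ne.symm hza) (Ne.symm hzb')
  have hS'inj : Function.Injective
      (fun i : Fin 3 => if i = 0 then Q' 0 else if i = 1 then Q 1 else z) :=
    inj3_s10 hba'.symm (Ne.symm hza') (Ne.symm hzb)
  have hansw : ∀ (R T : Fin 3 → Fin c), answer R T =
      (if R 0 = T 0 then 1 else 0) + (if R 1 = T 1 then 1 else 0) +
      (if R 2 = T 2 then 1 else 0) := by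
    intro R T
    rw [answer, Finset.card_filter, Fin.sum_univ_three]
  have hmap : qs.map
        (fun R => answer R (fun i : Fin 3 => if i = 0 then Q 0 else if i = 1 then Q' 1 else z))
      = qs.map
        (fun R => answer R (fun i : Fin 3 => if i = 0 then Q' 0 else if i = 1 then Q 1 else z)) := by
    apply List.map_congr_left
    intro R hR
    have eS : answer R (fun i : Fin 3 => if i = 0 then Q 0 else if i = 1 then Q' 1 else z)
        = ((if R 0 = Q 0 then 1 else 0) + if R 1 = Q' 1 then 1 else 0)
          + if R 2 = z then 1 else 0 := hansw R _
    have eS' : answer R (fun i : Fin 3 => if i = 0 then Q' 0 else if i = 1 then Q 1 else z)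
        = ((if R 0 = Q' 0 then 1 else 0) + if R 1 = Q 1 then 1 else 0)
          + if R 2 = z then 1 else 0 := hansw R _
    rw [eS, eS']
    have key : (if R 0 = Q 0 then 1 else 0) + (if R 1 = Q' 1 then 1 else 0) =
        (if R 0 = Q' 0 then 1 else 0) + (if R 1 = Q 1 then 1 else 0) := by
      by_cases hA : R 0 = Q 0
      · have hRQ := u0 R hR hA
        have hB : R 1 = Q 1 := by rw [hRQ]
        have hC : ¬ R 0 = Q' 0 := hRQ ▸ haa'
        have hD : ¬ R 1 = Q' 1 := hRQ ▸ hbb'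
        simp [hA, hB, hC, hD, haa', hbb']
      · by_cases hB : R 1 = Q 1
        · exact absurd (by rw [u1 R hR hB]) hA
        · by_cases hC : R 0 = Q' 0
          · have hRQ := u0' R hR hC
            have hD : R 1 = Q' 1 := by rw [hRQ]
            simp [hA, hB, hC, hD, Ne.symm haa', Ne.symm hbb']
          · by_cases hD : R 1 = Q' 1
            · exact absurd (by rw [u1' R hR hD]) hC
            · simp [hA, hB, hC, hD]
    rw [key]
  have hSS' := hfeas _ _ hSinj hS'inj hmap
  exact haa' (congrFun hSS' 0)
end

section
/- For the Static Black-Peg AB Game with 3 pegs and c ≥ 5 colors: a feasible strategy cannot contain four (1,1,⋆)-questions. -/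
/-- `answer` for three pegs, explicitly. -/
lemma answer_three {c : ℕ} (Q S : Fin 3 → Fin c) :
    answer Q S = (if Q 0 = S 0 then 1 else 0) + (if Q 1 = S 1 then 1 else 0)
      + (if Q 2 = S 2 then 1 else 0) := by
  unfold answer
  rw [Finset.card_filter, Fin.sum_univ_three]

/-- If a color occurs only once on peg `i`, two members of the strategy sharing it
on peg `i` are equal. -/
lemma occ_unique {p c : ℕ} {qs : List (Fin p → Fin c)} (hnd : qs.Nodup)
    {i : Fin p} {v : Fin c} (h1 : occ qs i v = 1)
    {Q Q' : Fin p → Fin c} (hQ : Q ∈ qs) (hQ' : Q' ∈ qs)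
    (hq : Q i = v) (hq' : Q' i = v) : Q = Q' := by
  by_contra hne
  set l := qs.filter (fun Q => decide (Q i = v)) with hl
  have hlen : l.length = 1 := by
    simpa [occ, List.countP_eq_length_filter] using h1
  have hQl : Q ∈ l := List.mem_filter.2 ⟨hQ, by simp [hq]⟩
  have hQ'l : Q' ∈ l := List.mem_filter.2 ⟨hQ', by simp [hq']⟩
  have hndl : l.Nodup := hnd.filter _
  have hsub : ({Q, Q'} : Finset (Fin p → Fin c)) ⊆ l.toFinset := by
    intro x hx
    rcases Finset.mem_insert.1 hx with rfl | hx
    · exact List.mem_toFinset.2 hQl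
    · exact List.mem_toFinset.2 (by simpa using (Finset.mem_singleton.1 hx ▸ hQ'l))
  have h2 : 2 ≤ l.toFinset.card := by
    rw [← Finset.card_pair hne]
    exact Finset.card_le_card hsub
  rw [List.toFinset_card_of_nodup hndl, hlen] at h2
  omega

/-- Among four indices with pairwise distinct `a`-values and pairwise distinct `b`-values,
some pair `j ≠ k` satisfies `a j ≠ b k` and `a k ≠ b j`. -/
lemma exists_good_pair {α : Type*} (a b : Fin 4 → α)
    (ha : ∀ i j : Fin 4, i ≠ j → a i ≠ a j) (hb : ∀ i j : Fin 4, i ≠ j → b i ≠ b j) :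
    ∃ j k, j ≠ k ∧ a j ≠ b k ∧ a k ≠ b j := by
  by_contra h
  push_neg at h
  have H : ∀ i j : Fin 4, i ≠ j → a i = b j ∨ a j = b i := by
    intro i j hij
    by_cases hx : a i = b j
    · exact Or.inl hx
    · exact Or.inr (h i j hij hx)
  rcases H 0 1 (by decide) with h1 | h1
  · rcases H 0 2 (by decide) with h2 | h2
    · exact hb 1 2 (by decide) (h1.symm.trans h2)
    · rcases H 0 3 (by decide) with h3 | h3
      · exact hb 1 3 (by decide) (h1.symm.trans h3)
      · exact ha 2 3 (by decide) (h2.trans h3.symm)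
  · rcases H 1 2 (by decide) with h2 | h2
    · exact hb 0 2 (by decide) (h1.symm.trans h2)
    · rcases H 1 3 (by decide) with h3 | h3
      · exact hb 0 3 (by decide) (h1.symm.trans h3)
      · exact ha 2 3 (by decide) (h2.trans h3.symm)

/-- With at least five colors, a color distinct from four given ones exists. -/
lemma fresh_color {c : ℕ} (hc : 5 ≤ c) (u v w z : Fin c) :
    ∃ x : Fin c, x ≠ u ∧ x ≠ v ∧ x ≠ w ∧ x ≠ z := by
  have h4 : ({u, v, w, z} : Finset (Fin c)).card ≤ 4 := by
    refine le_trans (Finset.card_insert_le _ _) ?_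
    have h3 : ({v, w, z} : Finset (Fin c)).card ≤ 3 := by
      refine le_trans (Finset.card_insert_le _ _) ?_
      have h2 : ({w, z} : Finset (Fin c)).card ≤ 2 :=
        le_trans (Finset.card_insert_le _ _) (by simp)
      omega
    omega
  have hne : ({u, v, w, z} : Finset (Fin c)) ≠ Finset.univ := by
    intro he
    rw [he, Finset.card_univ, Fintype.card_fin] at h4
    omega
  obtain ⟨x, -, hx⟩ := Finset.exists_of_ssubset (Finset.ssubset_univ_iff.2 hne)
  simp only [Finset.mem_insert, Finset.mem_singleton, not_or] at hx
  exact ⟨x, hx.1, hx.2.1, hx.2.2.1, hx.2.2.2⟩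

lemma inj3_s11 {c : ℕ} {u v w : Fin c} (h1 : u ≠ v) (h2 : u ≠ w) (h3 : v ≠ w) :
    Function.Injective (![u, v, w] : Fin 3 → Fin c) := by
  intro i j hij
  fin_cases i <;> fin_cases j <;> simp_all

/-- The core argument: two questions `A ≠ B` of a feasible strategy, each being a
(1,1,⋆)-question, with `A 0 ≠ B 1` and `B 0 ≠ A 1`, are impossible. -/
lemma two_question {c : ℕ} (hc : 5 ≤ c) {qs : List (Fin 3 → Fin c)}
    (hqs : Feasible qs) {A B : Fin 3 → Fin c}
    (hA : A ∈ qs) (hB : B ∈ qs) (hAB : A ≠ B)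
    (oA0 : occ qs 0 (A 0) = 1) (oA1 : occ qs 1 (A 1) = 1)
    (oB0 : occ qs 0 (B 0) = 1) (oB1 : occ qs 1 (B 1) = 1)
    (hx1 : A 0 ≠ B 1) (hx2 : B 0 ≠ A 1) : False := by
  obtain ⟨hnd, hinj, hfeas⟩ := hqs
  have hA0B0 : A 0 ≠ B 0 := fun h => hAB (occ_unique hnd oB0 hA hB h rfl)
  have hA1B1 : A 1 ≠ B 1 := fun h => hAB (occ_unique hnd oB1 hA hB h rfl)
  obtain ⟨x, hxu, hxv, hxw, hxz⟩ := fresh_color hc (A 0) (B 0) (A 1) (B 1)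
  set S : Fin 3 → Fin c := ![A 0, B 1, x] with hSdef
  set S' : Fin 3 → Fin c := ![B 0, A 1, x] with hS'def
  have hSinj : Function.Injective S := inj3_s11 hx1 hxu.symm hxz.symm
  have hS'inj : Function.Injective S' := inj3_s11 hx2 hxv.symm hxw.symm
  have hS0 : S 0 = A 0 := rfl
  have hS1 : S 1 = B 1 := rfl
  have hS2 : S 2 = x := rfl
  have hS'0 : S' 0 = B 0 := rfl
  have hS'1 : S' 1 = A 1 := rfl
  have hS'2 : S' 2 = x := rfl
  have key : ∀ Q ∈ qs, answer Q S = answer Q S' := by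
    intro Q hQ
    rw [answer_three, answer_three, hS0, hS1, hS2, hS'0, hS'1, hS'2]
    by_cases hQA : Q = A
    · subst hQA
      simp [hA1B1, hA0B0]
    · by_cases hQB : Q = B
      · subst hQB
        simp [Ne.symm hA0B0, Ne.symm hA1B1]
      · have n1 : Q 0 ≠ A 0 := fun h => hQA (occ_unique hnd oA0 hQ hA h rfl)
        have n2 : Q 0 ≠ B 0 := fun h => hQB (occ_unique hnd oB0 hQ hB h rfl)
        have n3 : Q 1 ≠ A 1 := fun h => hQA (occ_unique hnd oA1 hQ hA h rfl)
        have n4 : Q 1 ≠ B 1 := fun h => hQB (occ_unique hnd oB1 hQ hB h rfl)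
        simp [n1, n2, n3, n4]
  have heq : S = S' :=
    hfeas S S' hSinj hS'inj (List.map_congr_left key)
  exact hA0B0 (by rw [← hS0, heq, hS'0])

theorem statement11 (c : ℕ) (hc : 5 ≤ c) (qs : List (Fin 3 → Fin c))
    (hqs : Feasible qs) :
    ¬ ∃ Q₁ Q₂ Q₃ Q₄ : Fin 3 → Fin c,
      Q₁ ∈ qs ∧ Q₂ ∈ qs ∧ Q₃ ∈ qs ∧ Q₄ ∈ qs ∧
      Q₁ ≠ Q₂ ∧ Q₁ ≠ Q₃ ∧ Q₁ ≠ Q₄ ∧ Q₂ ≠ Q₃ ∧ Q₂ ≠ Q₄ ∧ Q₃ ≠ Q₄ ∧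
      (occ qs 0 (Q₁ 0) = 1 ∧ occ qs 1 (Q₁ 1) = 1) ∧
      (occ qs 0 (Q₂ 0) = 1 ∧ occ qs 1 (Q₂ 1) = 1) ∧
      (occ qs 0 (Q₃ 0) = 1 ∧ occ qs 1 (Q₃ 1) = 1) ∧
      (occ qs 0 (Q₄ 0) = 1 ∧ occ qs 1 (Q₄ 1) = 1) := by
  rintro ⟨Q₁, Q₂, Q₃, Q₄, h1, h2, h3, h4, h12, h13, h14, h23, h24, h34,
    ⟨o10, o11⟩, ⟨o20, o21⟩, ⟨o30, o31⟩, ⟨o40, o41⟩⟩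
  obtain ⟨hnd, hinj, hfeas⟩ := hqs
  set Qf : Fin 4 → (Fin 3 → Fin c) := ![Q₁, Q₂, Q₃, Q₄] with hQf
  have hmem : ∀ i : Fin 4, Qf i ∈ qs := by
    intro i; fin_cases i <;> assumption
  have hocc0 : ∀ i : Fin 4, occ qs 0 (Qf i 0) = 1 := by
    intro i; fin_cases i <;> assumption
  have hocc1 : ∀ i : Fin 4, occ qs 1 (Qf i 1) = 1 := by
    intro i; fin_cases i <;> assumption
  have hnei : ∀ i j : Fin 4, i ≠ j → Qf i ≠ Qf j := by
    intro i j hij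
    fin_cases i <;> fin_cases j <;>
      first
        | exact absurd rfl hij
        | assumption
        | exact Ne.symm (by assumption)
  have ha : ∀ i j : Fin 4, i ≠ j → Qf i 0 ≠ Qf j 0 := by
    intro i j hij h
    exact hnei i j hij (occ_unique hnd (hocc0 j) (hmem i) (hmem j) h rfl)
  have hb : ∀ i j : Fin 4, i ≠ j → Qf i 1 ≠ Qf j 1 := by
    intro i j hij h
    exact hnei i j hij (occ_unique hnd (hocc1 j) (hmem i) (hmem j) h rfl)
  obtain ⟨j, k, hjk, hgood1, hgood2⟩ :=
    exists_good_pair (fun i => Qf i 0) (fun i => Qf i 1) ha hb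
  exact two_question hc ⟨hnd, hinj, hfeas⟩ (hmem j) (hmem k) (hnei j k hjk)
    (hocc0 j) (hocc1 j) (hocc0 k) (hocc1 k) hgood1 hgood2
end

section
/- For the Static Black-Peg AB Game with 3 pegs and c ≥ 5 colors: suppose a feasible strategy contains a (1,1,⋆)-question Q, and suppose the color q₃ is missing on peg 0 and the color q₄ is missing on peg 1. Then q₃ ≠ q₄, and moreover Q 0 = q₄ or Q 1 = q₃. -/
lemma eq_of_countP_eq_one {α : Type*} {l : List α} {p : α → Bool} (h : l.countP p = 1)
    {a b : α} (ha : a ∈ l) (hb : b ∈ l) (hpa : p a) (hpb : p b) : a = b := by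
  rw [List.countP_eq_length_filter] at h
  obtain ⟨x, hx⟩ := List.length_eq_one_iff.mp h
  have ha' : a ∈ l.filter p := List.mem_filter.mpr ⟨ha, hpa⟩
  have hb' : b ∈ l.filter p := List.mem_filter.mpr ⟨hb, hpb⟩
  rw [hx, List.mem_singleton] at ha' hb'
  rw [ha', hb']

theorem statement12 (c : ℕ) (hc : 5 ≤ c) (qs : List (Fin 3 → Fin c))
    (hqs : Feasible qs) (Q : Fin 3 → Fin c) (hQ : Q ∈ qs)
    (hone : occ qs 0 (Q 0) = 1 ∧ occ qs 1 (Q 1) = 1)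
    (q₃ q₄ : Fin c)
    (h₃ : ∀ Q' ∈ qs, Q' 0 ≠ q₃)
    (h₄ : ∀ Q' ∈ qs, Q' 1 ≠ q₄) :
    q₃ ≠ q₄ ∧ (Q 0 = q₄ ∨ Q 1 = q₃) := by
  by_contra hcon
  push_neg at hcon
  have hQ0 : Q 0 ≠ q₃ := h₃ Q hQ
  have hQ1 : Q 1 ≠ q₄ := h₄ Q hQ
  have hA : Q 0 ≠ q₄ ∧ Q 1 ≠ q₃ := by
    by_cases h : q₃ = q₄
    · subst h; exact ⟨hQ0, hQ1⟩
    · exact hcon h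
  -- find a fresh color z
  have h1 : ({Q 0, Q 1, q₃, q₄} : Finset (Fin c)).card ≤ 4 := by
    have a1 := Finset.card_insert_le (Q 0) ({Q 1, q₃, q₄} : Finset (Fin c))
    have a2 := Finset.card_insert_le (Q 1) ({q₃, q₄} : Finset (Fin c))
    have a3 := Finset.card_insert_le q₃ ({q₄} : Finset (Fin c))
    have a4 : ({q₄} : Finset (Fin c)).card = 1 := Finset.card_singleton _
    omega
  have h2 : 0 < (({Q 0, Q 1, q₃, q₄} : Finset (Fin c))ᶜ).card := by
    rw [Finset.card_compl]
    simp only [Fintype.card_fin]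
    omega
  obtain ⟨z, hz⟩ := Finset.card_pos.mp h2
  simp only [Finset.mem_compl, Finset.mem_insert, Finset.mem_singleton, not_or] at hz
  obtain ⟨hz0, hz1, hz3, hz4⟩ := hz
  -- the two secrets
  set S : Fin 3 → Fin c := ![Q 0, q₄, z] with hS
  set S' : Fin 3 → Fin c := ![q₃, Q 1, z] with hS'
  have hSv0 : S 0 = Q 0 := rfl
  have hSv1 : S 1 = q₄ := rfl
  have hSv2 : S 2 = z := rfl
  have hS'v0 : S' 0 = q₃ := rfl
  have hS'v1 : S' 1 = Q 1 := rfl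
  have hS'v2 : S' 2 = z := rfl
  have hSinj : Function.Injective S := by
    intro i j h
    fin_cases i <;> fin_cases j <;>
      simp_all [hSv0, hSv1, hSv2]
  have hS'inj : Function.Injective S' := by
    intro i j h
    fin_cases i <;> fin_cases j <;>
      simp_all [hS'v0, hS'v1, hS'v2]
  -- uniqueness of Q's colors on pegs 0 and 1
  have huniq0 : ∀ Q' ∈ qs, Q' 0 = Q 0 → Q' = Q := fun Q' h' he =>
    eq_of_countP_eq_one hone.1 h' hQ (by simp [he]) (by simp)
  have huniq1 : ∀ Q' ∈ qs, Q' 1 = Q 1 → Q' = Q := fun Q' h' he =>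
    eq_of_countP_eq_one hone.2 h' hQ (by simp [he]) (by simp)
  -- equal answer lists
  have hmap : qs.map (fun Q' => answer Q' S) = qs.map (fun Q' => answer Q' S') := by
    apply List.map_congr_left
    intro Q' hQ'
    rw [answer_three, answer_three, hSv0, hSv1, hSv2, hS'v0, hS'v1, hS'v2]
    by_cases hQQ : Q' = Q
    · subst hQQ
      rw [if_pos rfl, if_pos rfl, if_neg hQ1, if_neg hQ0]
    · have e0 : Q' 0 ≠ Q 0 := fun he => hQQ (huniq0 Q' hQ' he)
      have e1 : Q' 1 ≠ Q 1 := fun he => hQQ (huniq1 Q' hQ' he)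
      rw [if_neg e0, if_neg e1, if_neg (h₃ Q' hQ'), if_neg (h₄ Q' hQ')]
  have heq : S = S' := hqs.2.2 S S' hSinj hS'inj hmap
  have : Q 0 = q₃ := by rw [← hSv0, heq, hS'v0]
  exact hQ0 this
end

section
/- For the Static Black-Peg AB Game with 3 pegs and c ≥ 5 colors: a feasible strategy contains at most two (1,1,1)-questions. -/
private lemma two_le_countP {α : Type*} [DecidableEq α] {l : List α} (hl : l.Nodup)
    {a b : α} (ha : a ∈ l) (hb : b ∈ l) (hab : a ≠ b) {p : α → Bool}
    (hpa : p a) (hpb : p b) : 2 ≤ l.countP p := by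
  have ha' : a ∈ l.filter p := List.mem_filter.2 ⟨ha, hpa⟩
  have hb' : b ∈ l.filter p := List.mem_filter.2 ⟨hb, hpb⟩
  have hsub : ({a, b} : Finset α) ⊆ (l.filter p).toFinset := by
    intro x hx
    simp only [Finset.mem_insert, Finset.mem_singleton] at hx
    rcases hx with rfl | rfl
    · exact List.mem_toFinset.2 ha'
    · exact List.mem_toFinset.2 hb'
  have h2 : ({a, b} : Finset α).card = 2 := by
    rw [Finset.card_insert_of_notMem (by simpa), Finset.card_singleton]
  calc 2 = ({a, b} : Finset α).card := h2.symm
    _ ≤ (l.filter p).toFinset.card := Finset.card_le_card hsub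
    _ ≤ (l.filter p).length := (l.filter p).toFinset_card_le
    _ = l.countP p := List.countP_eq_length_filter.symm

private lemma fin3_key : ∀ a b x y : Fin 3, x ≠ y → a ≠ x → a ≠ y → b ≠ x → b ≠ y → a = b := by
  decide

private lemma fin3_cover : ∀ i j k l : Fin 3, i ≠ j → k ≠ l →
    (k = i ∨ k = j) ∨ (l = i ∨ l = j) := by decide

private lemma perm_eq_of_two (σ τ : Equiv.Perm (Fin 3)) {i j : Fin 3} (hij : i ≠ j)
    (h1 : σ i = τ i) (h2 : σ j = τ j) : σ = τ := by
  refine Equiv.ext fun m => ?_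
  by_cases hmi : m = i
  · subst hmi; exact h1
  by_cases hmj : m = j
  · subst hmj; exact h2
  · refine fin3_key (σ m) (τ m) (τ i) (τ j) (τ.injective.ne hij) ?_ ?_
      (τ.injective.ne hmi) (τ.injective.ne hmj)
    · rw [← h1]; exact σ.injective.ne hmi
    · rw [← h2]; exact σ.injective.ne hmj

/-- Key combinatorial lemma: given a 3×3 color matrix with injective rows and columns,
at least two of the six permutation transversals are rainbow. -/
private lemma key_lemma {α : Type*} [DecidableEq α] (M : Fin 3 → Fin 3 → α)
    (hrow : ∀ k, Function.Injective (M k))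
    (hcol : ∀ (i a b : Fin 3), M a i = M b i → a = b) :
    ∃ σ τ : Equiv.Perm (Fin 3), σ ≠ τ ∧
      Function.Injective (fun i => M (σ i) i) ∧
      Function.Injective (fun i => M (τ i) i) := by
  classical
  set P : Finset (Equiv.Perm (Fin 3)) :=
    Finset.univ.filter (fun σ => ¬ Function.Injective (fun i => M (σ i) i)) with hP
  -- every non-rainbow permutation has a repeated color
  have hE : ∀ σ ∈ P, ∃ pr : Fin 3 × Fin 3, pr.1 ≠ pr.2 ∧ M (σ pr.1) pr.1 = M (σ pr.2) pr.2 := by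
    intro σ hσ
    rw [hP, Finset.mem_filter] at hσ
    obtain ⟨x, y, hxy, hne⟩ := Function.not_injective_iff.1 hσ.2
    exact ⟨(x, y), hne, hxy⟩
  set fib : α → Finset (Fin 3 × Fin 3) :=
    fun q => Finset.univ.filter (fun x => M x.1 x.2 = q) with hfib
  set T : Finset α :=
    ((Finset.univ : Finset (Fin 3 × Fin 3)).image (fun x => M x.1 x.2)).filter
      (fun q => 2 ≤ (fib q).card) with hT
  set f : Equiv.Perm (Fin 3) → α := fun σ =>
    if h : ∃ pr : Fin 3 × Fin 3, pr.1 ≠ pr.2 ∧ M (σ pr.1) pr.1 = M (σ pr.2) pr.2 then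
      M (σ h.choose.1) h.choose.1 else M 0 0 with hf
  -- properties of fibers: partial transversals
  have hfibcol : ∀ q, ∀ x ∈ fib q, ∀ y ∈ fib q, x.2 = y.2 → x = y := by
    intro q x hx y hy h2
    rw [hfib] at hx hy
    simp only [Finset.mem_filter] at hx hy
    have : M x.1 x.2 = M y.1 y.2 := by rw [hx.2, hy.2]
    rw [h2] at this
    have := hcol _ _ _ this
    exact Prod.ext this h2
  have hfibrow : ∀ q, ∀ x ∈ fib q, ∀ y ∈ fib q, x.1 = y.1 → x = y := by
    intro q x hx y hy h1
    rw [hfib] at hx hy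
    simp only [Finset.mem_filter] at hx hy
    have : M x.1 x.2 = M y.1 y.2 := by rw [hx.2, hy.2]
    rw [h1] at this
    have := hrow y.1 this
    exact Prod.ext h1 this
  have hmaps : ∀ σ ∈ P, f σ ∈ T := by
    intro σ hσ
    have h := hE σ hσ
    rw [hf]
    simp only [dif_pos h]
    obtain ⟨hne, heq⟩ := h.choose_spec
    set i := h.choose.1
    set j := h.choose.2
    rw [hT, Finset.mem_filter]
    constructor
    · exact Finset.mem_image.2 ⟨(σ i, i), Finset.mem_univ _, rfl⟩
    · have h1 : (σ i, i) ∈ fib (M (σ i) i) := by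
        rw [hfib]; simp
      have h2 : (σ j, j) ∈ fib (M (σ i) i) := by
        rw [hfib]; simp [heq.symm]
      have : 1 < (fib (M (σ i) i)).card :=
        Finset.one_lt_card.2 ⟨_, h1, _, h2, by simp [hne]⟩
      omega
  have hinjOn : Set.InjOn f P := by
    intro σ hσ τ hτ hfστ
    have hEσ := hE σ hσ
    have hEτ := hE τ hτ
    rw [hf] at hfστ
    simp only [dif_pos hEσ, dif_pos hEτ] at hfστ
    obtain ⟨hijne, hijeq⟩ := hEσ.choose_spec
    obtain ⟨hklne, hkleq⟩ := hEτ.choose_spec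
    set i := hEσ.choose.1 with hi
    set j := hEσ.choose.2 with hj
    set k := hEτ.choose.1 with hk
    set l := hEτ.choose.2 with hl
    set q := M (σ i) i with hq
    have hqi : M (σ i) i = q := rfl
    have hqj : M (σ j) j = q := hijeq.symm ▸ rfl
    have hqk : M (τ k) k = q := hfστ.symm
    have hql : M (τ l) l = q := by rw [← hkleq]; exact hfστ.symm
    -- agreement on common columns
    have hcc : ∀ x : Fin 3, M (σ x) x = q → M (τ x) x = q → σ x = τ x := by
      intro x h1 h2
      exact hcol x _ _ (h1.trans h2.symm)
    -- agreement on a column outside {i, j}, for σ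
    have hout : ∀ (x r : Fin 3), x ≠ i → x ≠ j → M r x = q → σ x = r := by
      intro x r hxi hxj hr
      refine fin3_key (σ x) r (σ i) (σ j) (σ.injective.ne hijne)
        (σ.injective.ne hxi) (σ.injective.ne hxj) ?_ ?_
      · intro h; exact hxi (congrArg Prod.snd (hfibrow q (r, x)
          (by rw [hfib]; simp [hr]) (σ i, i) (by rw [hfib]; simp [hqi]) h))
      · intro h; exact hxj (congrArg Prod.snd (hfibrow q (r, x)
          (by rw [hfib]; simp [hr]) (σ j, j) (by rw [hfib]; simp [hqj]) h))
    have hout' : ∀ (x r : Fin 3), x ≠ k → x ≠ l → M r x = q → τ x = r := by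
      intro x r hxk hxl hr
      refine fin3_key (τ x) r (τ k) (τ l) (τ.injective.ne hklne)
        (τ.injective.ne hxk) (τ.injective.ne hxl) ?_ ?_
      · intro h; exact hxk (congrArg Prod.snd (hfibrow q (r, x)
          (by rw [hfib]; simp [hr]) (τ k, k) (by rw [hfib]; simp [hqk]) h))
      · intro h; exact hxl (congrArg Prod.snd (hfibrow q (r, x)
          (by rw [hfib]; simp [hr]) (τ l, l) (by rw [hfib]; simp [hql]) h))
    by_cases hkin : k = i ∨ k = j
    · by_cases hlin : l = i ∨ l = j
      · -- both τ-columns inside {i,j}: since k ≠ l, {k,l} = {i,j}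
        have hsk : σ k = τ k := by
          rcases hkin with h | h
          · exact hcc k (by rw [h]) hqk
          · exact hcc k (by rw [h]; exact hqj) hqk
        have hsl : σ l = τ l := by
          rcases hlin with h | h
          · exact hcc l (by rw [h]) hql
          · exact hcc l (by rw [h]; exact hqj) hql
        exact perm_eq_of_two σ τ hklne hsk hsl
      · push_neg at hlin
        have hsl : σ l = τ l := hout l (τ l) hlin.1 hlin.2 hql
        have hsk : σ k = τ k := by
          rcases hkin with h | h
          · exact hcc k (by rw [h]) hqk
          · exact hcc k (by rw [h]; exact hqj) hqk
        exact perm_eq_of_two σ τ hklne hsk hsl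
    · push_neg at hkin
      have hsk : σ k = τ k := hout k (τ k) hkin.1 hkin.2 hqk
      have hlin : l = i ∨ l = j := by
        rcases fin3_cover i j k l hijne hklne with h | h
        · exact absurd h (by push_neg; exact hkin)
        · exact h
      have hsl : σ l = τ l := by
        rcases hlin with h | h
        · exact hcc l (by rw [h]) hql
        · exact hcc l (by rw [h]; exact hqj) hql
      exact perm_eq_of_two σ τ hklne hsk hsl
  -- bound the number of heavy colors
  have hsum : ∑ q ∈ ((Finset.univ : Finset (Fin 3 × Fin 3)).image (fun x => M x.1 x.2)),
      (fib q).card = 9 := by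
    have := Finset.card_eq_sum_card_fiberwise
      (f := fun x : Fin 3 × Fin 3 => M x.1 x.2)
      (s := Finset.univ) (t := (Finset.univ : Finset (Fin 3 × Fin 3)).image (fun x => M x.1 x.2))
      (fun x _ => Finset.mem_image.2 ⟨x, Finset.mem_univ _, rfl⟩)
    rw [← this]
    simp
  have hTsum : ∑ q ∈ T, (fib q).card ≤ 9 := by
    rw [← hsum]
    refine Finset.sum_le_sum_of_subset ?_
    rw [hT]; exact Finset.filter_subset _ _
  have hTcard : T.card ≤ 4 := by
    have h2 : ∀ q ∈ T, 2 ≤ (fib q).card := by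
      intro q hq; rw [hT, Finset.mem_filter] at hq; exact hq.2
    have : 2 * T.card ≤ ∑ q ∈ T, (fib q).card := by
      calc 2 * T.card = ∑ _q ∈ T, 2 := by rw [Finset.sum_const, smul_eq_mul, mul_comm]
        _ ≤ ∑ q ∈ T, (fib q).card := Finset.sum_le_sum h2
    omega
  have hPcard : P.card ≤ 4 :=
    le_trans (Finset.card_le_card_of_injOn f hmaps hinjOn) hTcard
  -- so at least two rainbow permutations
  have htotal : (Finset.univ : Finset (Equiv.Perm (Fin 3))).card = 6 := by
    simp only [Finset.card_univ, Fintype.card_perm, Fintype.card_fin]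
    decide
  set R : Finset (Equiv.Perm (Fin 3)) :=
    Finset.univ.filter (fun σ => Function.Injective (fun i => M (σ i) i)) with hR
  have hRP : R.card + P.card = 6 := by
    rw [hR, hP, Finset.card_filter_add_card_filter_not, htotal]
  have hRcard : 1 < R.card := by omega
  obtain ⟨σ, hσ, τ, hτ, hστ⟩ := Finset.one_lt_card.1 hRcard
  rw [hR, Finset.mem_filter] at hσ hτ
  exact ⟨σ, τ, hστ, hσ.2, hτ.2⟩

private lemma answer_transversal {c : ℕ} (M : Fin 3 → Fin 3 → Fin c)
    (hcol : ∀ (i a b : Fin 3), M a i = M b i → a = b) (ρ : Equiv.Perm (Fin 3)) (k : Fin 3) :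
    answer (M k) (fun i => M (ρ i) i) = 1 := by
  unfold answer
  have h : (Finset.univ.filter fun i => M k i = M (ρ i) i) = {ρ.symm k} := by
    ext i
    simp only [Finset.mem_filter, Finset.mem_univ, true_and, Finset.mem_singleton]
    constructor
    · intro h
      have := hcol i k (ρ i) h
      rw [this, Equiv.symm_apply_apply]
    · rintro rfl
      rw [Equiv.apply_symm_apply]
  rw [h, Finset.card_singleton]

private lemma answer_zero {c : ℕ} (Q S : Fin 3 → Fin c) (h : ∀ i, Q i ≠ S i) :
    answer Q S = 0 := by
  unfold answer
  rw [Finset.card_eq_zero, Finset.filter_eq_empty_iff]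
  exact fun i _ => h i

theorem statement14 (c : ℕ) (hc : 5 ≤ c) (qs : List (Fin 3 → Fin c))
    (hqs : Feasible qs) :
    qs.countP (fun Q => decide (∀ i : Fin 3, occ qs i (Q i) = 1)) ≤ 2 := by
  classical
  by_contra hcon
  push_neg at hcon
  obtain ⟨hnd, hinj, hfeas⟩ := hqs
  set p : (Fin 3 → Fin c) → Bool := fun Q => decide (∀ i : Fin 3, occ qs i (Q i) = 1) with hp
  have hlen : 3 ≤ (qs.filter p).length := by
    rw [← List.countP_eq_length_filter]; omega
  set l : List (Fin 3 → Fin c) := qs.filter p with hl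
  have hndl : l.Nodup := hnd.filter p
  -- extract three distinct (1,1,1)-questions
  have h0 : (0 : ℕ) < l.length := by omega
  have h1 : (1 : ℕ) < l.length := by omega
  have h2 : (2 : ℕ) < l.length := by omega
  set A := l.get ⟨0, h0⟩ with hA
  set B := l.get ⟨1, h1⟩ with hB
  set C := l.get ⟨2, h2⟩ with hC
  have hABne : A ≠ B := by
    intro h
    have := (List.Nodup.get_inj_iff hndl).1 h
    simp at this
  have hACne : A ≠ C := by
    intro h
    have := (List.Nodup.get_inj_iff hndl).1 h
    simp at this
  have hBCne : B ≠ C := by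
    intro h
    have := (List.Nodup.get_inj_iff hndl).1 h
    simp at this
  have hmem : ∀ Q ∈ l, Q ∈ qs ∧ ∀ i, occ qs i (Q i) = 1 := by
    intro Q hQ
    rw [hl, List.mem_filter] at hQ
    exact ⟨hQ.1, of_decide_eq_true hQ.2⟩
  have hAl : A ∈ l := l.get_mem _
  have hBl : B ∈ l := l.get_mem _
  have hCl : C ∈ l := l.get_mem _
  obtain ⟨hAqs, hAocc⟩ := hmem A hAl
  obtain ⟨hBqs, hBocc⟩ := hmem B hBl
  obtain ⟨hCqs, hCocc⟩ := hmem C hCl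
  -- no other question shares a color on a peg with a (1,1,1)-question
  have huniq : ∀ (Q R : Fin 3 → Fin c), Q ∈ qs → R ∈ qs → Q ≠ R →
      (∀ i, occ qs i (R i) = 1) → ∀ i, Q i ≠ R i := by
    intro Q R hQ hR hQR hocc i h
    have h2le : 2 ≤ qs.countP (fun Q => decide (Q i = R i)) :=
      two_le_countP hnd hQ hR hQR (by simp [h]) (by simp)
    have h1 := hocc i
    unfold occ at h1
    rw [h1] at h2le
    exact absurd h2le (by norm_num)
  -- the color matrix
  set M : Fin 3 → Fin 3 → Fin c := ![A, B, C] with hM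
  have hMA : M 0 = A := rfl
  have hMB : M 1 = B := rfl
  have hMC : M 2 = C := rfl
  have hrow : ∀ k, Function.Injective (M k) := by
    intro k
    fin_cases k
    · exact hinj A hAqs
    · exact hinj B hBqs
    · exact hinj C hCqs
  have hcol : ∀ (i a b : Fin 3), M a i = M b i → a = b := by
    intro i a b
    fin_cases a <;> fin_cases b <;> intro h <;> first
      | rfl
      | exact absurd h (huniq _ _ hAqs hBqs hABne hBocc i)
      | exact absurd h (huniq _ _ hAqs hCqs hACne hCocc i)
      | exact absurd h (huniq _ _ hBqs hAqs hABne.symm hAocc i)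
      | exact absurd h (huniq _ _ hBqs hCqs hBCne hCocc i)
      | exact absurd h (huniq _ _ hCqs hAqs hACne.symm hAocc i)
      | exact absurd h (huniq _ _ hCqs hBqs hBCne.symm hBocc i)
  obtain ⟨σ, τ, hστ, hSinj, hTinj⟩ := key_lemma M hrow hcol
  set S : Fin 3 → Fin c := fun i => M (σ i) i with hS
  set S' : Fin 3 → Fin c := fun i => M (τ i) i with hS'
  have hSS' : S ≠ S' := by
    intro h
    apply hστ
    apply Equiv.ext
    intro i
    have : M (σ i) i = M (τ i) i := congrFun h i
    exact hcol i _ _ this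
  have hanseq : ∀ Q ∈ qs, answer Q S = answer Q S' := by
    intro Q hQ
    by_cases hQA : Q = A
    · subst hQA
      rw [← hMA, hS, hS', answer_transversal M hcol σ 0, answer_transversal M hcol τ 0]
    by_cases hQB : Q = B
    · subst hQB
      rw [← hMB, hS, hS', answer_transversal M hcol σ 1, answer_transversal M hcol τ 1]
    by_cases hQC : Q = C
    · subst hQC
      rw [← hMC, hS, hS', answer_transversal M hcol σ 2, answer_transversal M hcol τ 2]
    · have hz : ∀ (r i : Fin 3), Q i ≠ M r i := by
        intro r i
        fin_cases r
        · exact huniq Q A hQ hAqs hQA hAocc i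
        · exact huniq Q B hQ hBqs hQB hBocc i
        · exact huniq Q C hQ hCqs hQC hCocc i
      rw [hS, hS', answer_zero Q _ (fun i => hz (σ i) i), answer_zero Q _ (fun i => hz (τ i) i)]
  have hmapeq : qs.map (fun Q => answer Q S) = qs.map (fun Q => answer Q S') :=
    List.map_congr_left hanseq
  exact hSS' (hfeas S S' hSinj hTinj hmapeq)
end

section
/- For the Static Black-Peg AB Game with 3 pegs and c ≥ 5 colors: if a feasible strategy is such that for each of the three pegs there is a color missing on that peg, then the strategy contains in total at most three questions that are (≥2,1,1)-questions, (1,≥2,1)-questions, or (1,1,≥2)-questions. -/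
namespace S17

variable {c : ℕ}

lemma fin3_mem (i j k : Fin 3) (hij : i ≠ j) (hik : i ≠ k) (hjk : j ≠ k) (t : Fin 3) :
    t = i ∨ t = j ∨ t = k := by revert i j k t; decide

def trip (i j k : Fin 3) (x y z : Fin c) : Fin 3 → Fin c :=
  fun t => if t = i then x else if t = j then y else z

lemma trip_fst (i j k : Fin 3) (x y z : Fin c) : trip i j k x y z i = x := by simp [trip]

lemma trip_snd {i j : Fin 3} (k : Fin 3) (hij : i ≠ j) (x y z : Fin c) :
    trip i j k x y z j = y := by simp [trip, Ne.symm hij]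

lemma trip_thd {i j k : Fin 3} (hik : i ≠ k) (hjk : j ≠ k) (x y z : Fin c) :
    trip i j k x y z k = z := by simp [trip, Ne.symm hik, Ne.symm hjk]

lemma answer_eq3 {i j k : Fin 3} (hij : i ≠ j) (hik : i ≠ k) (hjk : j ≠ k)
    (R S : Fin 3 → Fin c) :
    answer R S = (if R i = S i then 1 else 0) +
      ((if R j = S j then 1 else 0) + (if R k = S k then 1 else 0)) := by
  have huniv : ({i, j, k} : Finset (Fin 3)) = Finset.univ :=
    Finset.eq_univ_iff_forall.mpr (fun t => by
      rcases fin3_mem i j k hij hik hjk t with h|h|h <;> simp [h])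
  rw [answer, ← huniv, Finset.card_filter,
    Finset.sum_insert (by simp [hij, hik]), Finset.sum_insert (by simp [hjk]),
    Finset.sum_singleton]

lemma inj_trip {i j k : Fin 3} (hij : i ≠ j) (hik : i ≠ k) (hjk : j ≠ k)
    {x y z : Fin c} (hxy : x ≠ y) (hxz : x ≠ z) (hyz : y ≠ z) :
    Function.Injective (trip i j k x y z) := by
  intro s t h
  rcases fin3_mem i j k hij hik hjk s with hs|hs|hs <;>
    rcases fin3_mem i j k hij hik hjk t with ht|ht|ht <;>
    subst hs <;> subst ht <;>
    simp only [trip_fst, trip_snd _ hij, trip_thd hik hjk] at h <;>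
    first
      | rfl
      | exact absurd h hxy
      | exact absurd h hxz
      | exact absurd h hyz
      | exact absurd h.symm hxy
      | exact absurd h.symm hxz
      | exact absurd h.symm hyz

lemma feas_eq {qs : List (Fin 3 → Fin c)} (hF : Feasible qs) {S S' : Fin 3 → Fin c}
    (hS : Function.Injective S) (hS' : Function.Injective S')
    (h : ∀ R ∈ qs, answer R S = answer R S') : S = S' :=
  hF.2.2 S S' hS hS' (List.map_congr_left h)

lemma exists_ne4 (hc : 5 ≤ c) (a b d e : Fin c) :
    ∃ x : Fin c, x ≠ a ∧ x ≠ b ∧ x ≠ d ∧ x ≠ e := by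
  by_contra h
  push_neg at h
  have hsub : (Finset.univ : Finset (Fin c)) ⊆ {a, b, d, e} := by
    intro x _
    simp only [Finset.mem_insert, Finset.mem_singleton]
    by_cases h1 : x = a
    · exact Or.inl h1
    by_cases h2 : x = b
    · exact Or.inr (Or.inl h2)
    by_cases h3 : x = d
    · exact Or.inr (Or.inr (Or.inl h3))
    · exact Or.inr (Or.inr (Or.inr (h x h1 h2 h3)))
  have h1 := Finset.card_le_card hsub
  have c1 := Finset.card_insert_le a ({b, d, e} : Finset (Fin c))
  have c2 := Finset.card_insert_le b ({d, e} : Finset (Fin c))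
  have c3 := Finset.card_insert_le d ({e} : Finset (Fin c))
  have c4 : ({e} : Finset (Fin c)).card = 1 := Finset.card_singleton e
  have h5 : (Finset.univ : Finset (Fin c)).card = c := by simp
  omega

lemma single_of_occ {qs : List (Fin 3 → Fin c)} {j : Fin 3} {Q : Fin 3 → Fin c}
    (hQ : Q ∈ qs) (h1 : occ qs j (Q j) = 1) :
    ∀ R ∈ qs, R j = Q j → R = Q := by
  classical
  intro R hR hRQ
  by_contra hne
  set pr : (Fin 3 → Fin c) → Bool := fun X => decide (X j = Q j) with hpr
  have hQf : Q ∈ qs.filter pr := List.mem_filter.mpr ⟨hQ, by simp [hpr]⟩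
  have hRf : R ∈ qs.filter pr := List.mem_filter.mpr ⟨hR, by simp [hpr, hRQ]⟩
  have hsub : ({Q, R} : Finset (Fin 3 → Fin c)) ⊆ (qs.filter pr).toFinset := by
    intro X hX
    rcases Finset.mem_insert.mp hX with h|h
    · exact List.mem_toFinset.mpr (h ▸ hQf)
    · exact List.mem_toFinset.mpr ((Finset.mem_singleton.mp h) ▸ hRf)
  have h2 : ({Q, R} : Finset (Fin 3 → Fin c)).card = 2 :=
    Finset.card_pair (fun h => hne h.symm)
  have h3 := Finset.card_le_card hsub
  have h4 := List.toFinset_card_le (qs.filter pr)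
  have h5 : occ qs j (Q j) = (qs.filter pr).length := List.countP_eq_length_filter
  omega
section SWAP
variable {c : ℕ} {qs : List (Fin 3 → Fin c)}

lemma L_fam (hc : 5 ≤ c) (hF : Feasible qs)
    {i j k : Fin 3} (hij : i ≠ j) (hik : i ≠ k) (hjk : j ≠ k)
    {Q : Fin 3 → Fin c} (hQ : Q ∈ qs)
    (sj : ∀ R ∈ qs, R j = Q j → R = Q) (sk : ∀ R ∈ qs, R k = Q k → R = Q)
    {y z : Fin c} (zy : ∀ R ∈ qs, R j ≠ y) (zz : ∀ R ∈ qs, R k ≠ z) :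
    y = Q k ∨ Q j = z := by
  by_contra hcon
  push_neg at hcon
  obtain ⟨h1, h2⟩ := hcon
  obtain ⟨x, hx1, hx2, hx3, hx4⟩ := exists_ne4 hc y (Q k) (Q j) z
  set S := trip i j k x y (Q k) with hS
  set S' := trip i j k x (Q j) z with hS'
  have hinjS : Function.Injective S := inj_trip hij hik hjk hx1 hx2 h1
  have hinjS' : Function.Injective S' := inj_trip hij hik hjk hx3 hx4 h2
  have hans : ∀ R ∈ qs, answer R S = answer R S' := by
    intro R hR
    rw [answer_eq3 hij hik hjk, answer_eq3 hij hik hjk, hS, hS',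
      trip_fst, trip_fst, trip_snd _ hij, trip_snd _ hij,
      trip_thd hik hjk, trip_thd hik hjk]
    by_cases hRQ : R = Q
    · subst hRQ
      rw [if_neg (zy R hR), if_pos rfl, if_pos rfl, if_neg (zz R hR)]
    · rw [if_neg (zy R hR), if_neg (fun h => hRQ (sk R hR h)),
        if_neg (fun h => hRQ (sj R hR h)), if_neg (zz R hR)]
  have := feas_eq hF hinjS hinjS' hans
  have hj := congrFun this j
  rw [hS, hS', trip_snd _ hij, trip_snd _ hij] at hj
  exact zy Q hQ hj.symm

lemma L_fam2 (hc : 5 ≤ c) (hF : Feasible qs)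
    {i j k : Fin 3} (hij : i ≠ j) (hik : i ≠ k) (hjk : j ≠ k)
    {Q Q' : Fin 3 → Fin c} (hQ : Q ∈ qs) (hQ' : Q' ∈ qs) (hQQ' : Q ≠ Q')
    (sQj : ∀ R ∈ qs, R j = Q j → R = Q) (sQk : ∀ R ∈ qs, R k = Q k → R = Q)
    (sQ'j : ∀ R ∈ qs, R j = Q' j → R = Q') (sQ'k : ∀ R ∈ qs, R k = Q' k → R = Q') :
    Q j = Q' k ∨ Q' j = Q k := by
  by_contra hcon
  push_neg at hcon
  obtain ⟨h1, h2⟩ := hcon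
  obtain ⟨x, hx1, hx2, hx3, hx4⟩ := exists_ne4 hc (Q j) (Q' k) (Q' j) (Q k)
  set S := trip i j k x (Q j) (Q' k) with hS
  set S' := trip i j k x (Q' j) (Q k) with hS'
  have hinjS : Function.Injective S := inj_trip hij hik hjk hx1 hx2 h1
  have hinjS' : Function.Injective S' := inj_trip hij hik hjk hx3 hx4 h2
  have hans : ∀ R ∈ qs, answer R S = answer R S' := by
    intro R hR
    rw [answer_eq3 hij hik hjk, answer_eq3 hij hik hjk, hS, hS',
      trip_fst, trip_fst, trip_snd _ hij, trip_snd _ hij,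
      trip_thd hik hjk, trip_thd hik hjk]
    by_cases hRQ : R = Q
    · subst hRQ
      rw [if_pos rfl, if_neg (fun h => hQQ' (sQ'k R hR h)),
        if_neg (fun h => hQQ' (sQ'j R hR h)), if_pos rfl]
    · by_cases hRQ' : R = Q'
      · subst hRQ'
        rw [if_neg (fun h => (hQQ'.symm : R ≠ Q) (sQj R hR h)), if_pos rfl, if_pos rfl,
          if_neg (fun h => (hQQ'.symm : R ≠ Q) (sQk R hR h))]
      · rw [if_neg (fun h => hRQ (sQj R hR h)), if_neg (fun h => hRQ' (sQ'k R hR h)),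
          if_neg (fun h => hRQ' (sQ'j R hR h)), if_neg (fun h => hRQ (sQk R hR h))]
  have := feas_eq hF hinjS hinjS' hans
  have hj := congrFun this j
  rw [hS, hS', trip_snd _ hij, trip_snd _ hij] at hj
  exact hQQ' (sQ'j Q hQ hj).symm.symm

lemma L_P (hF : Feasible qs)
    {u w v : Fin 3} (huw : u ≠ w) (huv : u ≠ v) (hwv : w ≠ v)
    {A B : Fin 3 → Fin c} (hA : A ∈ qs) (hB : B ∈ qs) (hAB : A ≠ B)
    (sAu : ∀ R ∈ qs, R u = A u → R = A) (sAw : ∀ R ∈ qs, R w = A w → R = A)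
    (sBw : ∀ R ∈ qs, R w = B w → R = B) (sBv : ∀ R ∈ qs, R v = B v → R = B)
    {zu zv : Fin c} (hzu : ∀ R ∈ qs, R u ≠ zu) (hzv : ∀ R ∈ qs, R v ≠ zv) :
    A u = B w ∨ A u = zv ∨ B w = zv ∨ zu = A w ∨ zu = B v ∨ A w = B v := by
  by_contra hcon
  push_neg at hcon
  obtain ⟨n1, n2, n3, n4, n5, n6⟩ := hcon
  set S := trip u w v (A u) (B w) zv with hS
  set S' := trip u w v zu (A w) (B v) with hS'
  have hinjS : Function.Injective S := inj_trip huw huv hwv n1 n2 n3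
  have hinjS' : Function.Injective S' := inj_trip huw huv hwv n4 n5 n6
  have hans : ∀ R ∈ qs, answer R S = answer R S' := by
    intro R hR
    rw [answer_eq3 huw huv hwv, answer_eq3 huw huv hwv, hS, hS',
      trip_fst, trip_fst, trip_snd _ huw, trip_snd _ huw,
      trip_thd huv hwv, trip_thd huv hwv]
    by_cases hRA : R = A
    · subst hRA
      rw [if_pos rfl, if_neg (fun h => hAB (sBw R hR h)), if_neg (hzv R hR),
        if_neg (hzu R hR), if_pos rfl, if_neg (fun h => hAB (sBv R hR h))]
    · by_cases hRB : R = B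
      · subst hRB
        rw [if_neg (fun h => (hAB.symm : R ≠ A) (sAu R hR h)), if_pos rfl,
          if_neg (hzv R hR), if_neg (hzu R hR),
          if_neg (fun h => (hAB.symm : R ≠ A) (sAw R hR h)), if_pos rfl]
      · rw [if_neg (fun h => hRA (sAu R hR h)), if_neg (fun h => hRB (sBw R hR h)),
          if_neg (hzv R hR), if_neg (hzu R hR), if_neg (fun h => hRA (sAw R hR h)),
          if_neg (fun h => hRB (sBv R hR h))]
  have := feas_eq hF hinjS hinjS' hans
  have hu := congrFun this u
  rw [hS, hS', trip_fst, trip_fst] at hu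
  exact hzu A hA hu

lemma L_P3 (hF : Feasible qs)
    {u v w : Fin 3} (huv : u ≠ v) (huw : u ≠ w) (hvw : v ≠ w)
    {A B E : Fin 3 → Fin c} (hA : A ∈ qs) (hB : B ∈ qs) (hE : E ∈ qs)
    (hAB : A ≠ B) (hAE : A ≠ E) (hBE : B ≠ E)
    (sBu : ∀ R ∈ qs, R u = B u → R = B) (sEu : ∀ R ∈ qs, R u = E u → R = E)
    (sEv : ∀ R ∈ qs, R v = E v → R = E) (sAv : ∀ R ∈ qs, R v = A v → R = A)
    (sAw : ∀ R ∈ qs, R w = A w → R = A) (sBw : ∀ R ∈ qs, R w = B w → R = B) :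
    B u = E v ∨ B u = A w ∨ E v = A w ∨ E u = A v ∨ E u = B w ∨ A v = B w := by
  by_contra hcon
  push_neg at hcon
  obtain ⟨n1, n2, n3, n4, n5, n6⟩ := hcon
  set S := trip u v w (B u) (E v) (A w) with hS
  set S' := trip u v w (E u) (A v) (B w) with hS'
  have hinjS : Function.Injective S := inj_trip huv huw hvw n1 n2 n3
  have hinjS' : Function.Injective S' := inj_trip huv huw hvw n4 n5 n6
  have hans : ∀ R ∈ qs, answer R S = answer R S' := by
    intro R hR
    rw [answer_eq3 huv huw hvw, answer_eq3 huv huw hvw, hS, hS',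
      trip_fst, trip_fst, trip_snd _ huv, trip_snd _ huv,
      trip_thd huw hvw, trip_thd huw hvw]
    by_cases hRA : R = A
    · subst hRA
      rw [if_neg (fun h => hAB (sBu R hR h)), if_neg (fun h => hAE (sEv R hR h)),
        if_pos rfl, if_neg (fun h => hAE (sEu R hR h)), if_pos rfl,
        if_neg (fun h => hAB (sBw R hR h))]
    · by_cases hRB : R = B
      · subst hRB
        rw [if_pos rfl, if_neg (fun h => hBE (sEv R hR h)),
          if_neg (fun h => (hAB.symm : R ≠ A) (sAw R hR h)),
          if_neg (fun h => hBE (sEu R hR h)),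
          if_neg (fun h => (hAB.symm : R ≠ A) (sAv R hR h)), if_pos rfl]
      · by_cases hRE : R = E
        · subst hRE
          rw [if_neg (fun h => (hBE.symm : R ≠ B) (sBu R hR h)), if_pos rfl,
            if_neg (fun h => (hAE.symm : R ≠ A) (sAw R hR h)), if_pos rfl,
            if_neg (fun h => (hAE.symm : R ≠ A) (sAv R hR h)),
            if_neg (fun h => (hBE.symm : R ≠ B) (sBw R hR h))]
        · rw [if_neg (fun h => hRB (sBu R hR h)), if_neg (fun h => hRE (sEv R hR h)),
            if_neg (fun h => hRA (sAw R hR h)), if_neg (fun h => hRE (sEu R hR h)),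
            if_neg (fun h => hRA (sAv R hR h)), if_neg (fun h => hRB (sBw R hR h))]
  have := feas_eq hF hinjS hinjS' hans
  have hu := congrFun this u
  rw [hS, hS', trip_fst, trip_fst] at hu
  exact hBE (sEu B hB hu)
end SWAP

section CASES
variable {c : ℕ} {qs : List (Fin 3 → Fin c)}

lemma C300 (hc : 5 ≤ c) (hF : Feasible qs)
    {i j k : Fin 3} (hij : i ≠ j) (hik : i ≠ k) (hjk : j ≠ k)
    (m : Fin 3 → Fin c) (hm : ∀ t : Fin 3, ∀ R ∈ qs, R t ≠ m t)
    {Q Q' Q'' : Fin 3 → Fin c} (hQ : Q ∈ qs) (hQ' : Q' ∈ qs) (hQ'' : Q'' ∈ qs)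
    (hQQ' : Q ≠ Q') (hQQ'' : Q ≠ Q'') (hQ'Q'' : Q' ≠ Q'')
    (sQj : ∀ R ∈ qs, R j = Q j → R = Q) (sQk : ∀ R ∈ qs, R k = Q k → R = Q)
    (sQ'j : ∀ R ∈ qs, R j = Q' j → R = Q') (sQ'k : ∀ R ∈ qs, R k = Q' k → R = Q')
    (sQ''j : ∀ R ∈ qs, R j = Q'' j → R = Q'') (sQ''k : ∀ R ∈ qs, R k = Q'' k → R = Q'') :
    False := by
  have F1 : m j = Q'' k ∨ Q'' j = m k :=
    L_fam hc hF hij hik hjk hQ'' sQ''j sQ''k (hm j) (hm k)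
  have F2 : Q j = Q'' k ∨ Q'' j = Q k :=
    L_fam2 hc hF hij hik hjk hQ hQ'' hQQ'' sQj sQk sQ''j sQ''k
  have F3 : Q' j = Q'' k ∨ Q'' j = Q' k :=
    L_fam2 hc hF hij hik hjk hQ' hQ'' hQ'Q'' sQ'j sQ'k sQ''j sQ''k
  rcases F1 with f|f
  · rcases F2 with g|g
    · exact hm j Q hQ (g.trans f.symm)
    · rcases F3 with h|h
      · exact hm j Q' hQ' (h.trans f.symm)
      · exact hQQ' (sQ'k Q hQ (g.symm.trans h))
  · rcases F2 with g|g
    · rcases F3 with h|h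
      · exact hQQ' (sQ'j Q hQ (g.trans h.symm))
      · exact hm k Q' hQ' (h.symm.trans f)
    · exact hm k Q hQ (g.symm.trans f)

lemma C220 (hc : 5 ≤ c) (hF : Feasible qs)
    {i j k : Fin 3} (hij : i ≠ j) (hik : i ≠ k) (hjk : j ≠ k)
    (m : Fin 3 → Fin c) (hm : ∀ t : Fin 3, ∀ R ∈ qs, R t ≠ m t)
    {Q Q' P P' : Fin 3 → Fin c}
    (hQ : Q ∈ qs) (hQ' : Q' ∈ qs) (hP : P ∈ qs) (hP' : P' ∈ qs)
    (hQQ' : Q ≠ Q') (hQP : Q ≠ P) (hQP' : Q ≠ P')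
    (hQ'P : Q' ≠ P) (hQ'P' : Q' ≠ P') (hPP' : P ≠ P')
    (sQj : ∀ R ∈ qs, R j = Q j → R = Q) (sQk : ∀ R ∈ qs, R k = Q k → R = Q)
    (sQ'j : ∀ R ∈ qs, R j = Q' j → R = Q') (sQ'k : ∀ R ∈ qs, R k = Q' k → R = Q')
    (sPi : ∀ R ∈ qs, R i = P i → R = P) (sPk : ∀ R ∈ qs, R k = P k → R = P)
    (sP'i : ∀ R ∈ qs, R i = P' i → R = P') (sP'k : ∀ R ∈ qs, R k = P' k → R = P') :
    False := by
  have F1 : m j = Q k ∨ Q j = m k :=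
    L_fam hc hF hij hik hjk hQ sQj sQk (hm j) (hm k)
  have F2 : m j = Q' k ∨ Q' j = m k :=
    L_fam hc hF hij hik hjk hQ' sQ'j sQ'k (hm j) (hm k)
  have F3 : m i = P k ∨ P i = m k :=
    L_fam hc hF hij.symm hjk hik hP sPi sPk (hm i) (hm k)
  have F4 : m i = P' k ∨ P' i = m k :=
    L_fam hc hF hij.symm hjk hik hP' sP'i sP'k (hm i) (hm k)
  have P1 : Q j = P k ∨ Q j = m i ∨ P k = m i ∨ m j = Q k ∨ m j = P i ∨ Q k = P i :=
    L_P hF hjk hij.symm hik.symm hQ hP hQP sQj sQk sPk sPi (hm j) (hm i)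
  have P2 : Q j = P' k ∨ Q j = m i ∨ P' k = m i ∨ m j = Q k ∨ m j = P' i ∨ Q k = P' i :=
    L_P hF hjk hij.symm hik.symm hQ hP' hQP' sQj sQk sP'k sP'i (hm j) (hm i)
  have P3 : Q' j = P k ∨ Q' j = m i ∨ P k = m i ∨ m j = Q' k ∨ m j = P i ∨ Q' k = P i :=
    L_P hF hjk hij.symm hik.symm hQ' hP hQ'P sQ'j sQ'k sPk sPi (hm j) (hm i)
  have P4 : Q' j = P' k ∨ Q' j = m i ∨ P' k = m i ∨ m j = Q' k ∨ m j = P' i ∨ Q' k = P' i :=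
    L_P hF hjk hij.symm hik.symm hQ' hP' hQ'P' sQ'j sQ'k sP'k sP'i (hm j) (hm i)
  rcases F1 with f1|f1 <;> rcases F2 with f2|f2
  · exact hQQ' (sQ'k Q hQ (f1.symm.trans f2))
  · rcases F3 with f3|f3 <;> rcases F4 with f4|f4
    · exact hPP' (sP'k P hP (f3.symm.trans f4))
    · -- f1 : m j = Q k, f2 : Q' j = m k, f3 : m i = P k, f4 : P' i = m k ; use P4
      rcases P4 with d|d|d|d|d|d
      · exact hm k P' hP' (d.symm.trans f2)
      · exact hm k P hP (f3.symm.trans (d.symm.trans f2))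
      · exact hPP' (sPk P' hP' (d.trans f3)).symm
      · exact hQQ' (sQ'k Q hQ (f1.symm.trans d))
      · exact hm k Q hQ (f1.symm.trans (d.trans f4))
      · exact hm k Q' hQ' (d.trans f4)
    · -- f1 : m j = Q k, f2 : Q' j = m k, f3 : P i = m k, f4 : m i = P' k ; use P3
      rcases P3 with d|d|d|d|d|d
      · exact hm k P hP (d.symm.trans f2)
      · exact hm k P' hP' (f4.symm.trans (d.symm.trans f2))
      · exact hPP' (sP'k P hP (d.trans f4))
      · exact hQQ' (sQ'k Q hQ (f1.symm.trans d))
      · exact hm k Q hQ (f1.symm.trans (d.trans f3))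
      · exact hm k Q' hQ' (d.trans f3)
    · exact hPP' (sPi P' hP' (f4.trans f3.symm)).symm
  · rcases F3 with f3|f3 <;> rcases F4 with f4|f4
    · exact hPP' (sP'k P hP (f3.symm.trans f4))
    · -- f1 : Q j = m k, f2 : m j = Q' k, f3 : m i = P k, f4 : P' i = m k ; use P2
      rcases P2 with d|d|d|d|d|d
      · exact hm k P' hP' (d.symm.trans f1)
      · exact hm k P hP (f3.symm.trans (d.symm.trans f1))
      · exact hPP' (sPk P' hP' (d.trans f3)).symm
      · exact hQQ' (sQ'k Q hQ (d.symm.trans f2))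
      · exact hm k Q' hQ' (f2.symm.trans (d.trans f4))
      · exact hm k Q hQ (d.trans f4)
    · -- f1 : Q j = m k, f2 : m j = Q' k, f3 : P i = m k, f4 : m i = P' k ; use P1
      rcases P1 with d|d|d|d|d|d
      · exact hm k P hP (d.symm.trans f1)
      · exact hm k P' hP' (f4.symm.trans (d.symm.trans f1))
      · exact hPP' (sP'k P hP (d.trans f4))
      · exact hQQ' (sQ'k Q hQ (d.symm.trans f2))
      · exact hm k Q' hQ' (f2.symm.trans (d.trans f3))
      · exact hm k Q hQ (d.trans f3)
    · exact hPP' (sPi P' hP' (f4.trans f3.symm)).symm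
  · exact hQQ' (sQj Q' hQ' (f2.trans f1.symm)).symm

lemma caseD (hc : 5 ≤ c) (hF : Feasible qs)
    {i j k : Fin 3} (hij : i ≠ j) (hik : i ≠ k) (hjk : j ≠ k)
    (m : Fin 3 → Fin c) (hm : ∀ t : Fin 3, ∀ R ∈ qs, R t ≠ m t)
    {Q Q' P D : Fin 3 → Fin c}
    (hQ : Q ∈ qs) (hQ' : Q' ∈ qs) (hP : P ∈ qs) (hD : D ∈ qs)
    (hQQ' : Q ≠ Q') (hQP : Q ≠ P) (hQD : Q ≠ D)
    (hQ'P : Q' ≠ P) (hQ'D : Q' ≠ D) (hPD : P ≠ D)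
    (sQj : ∀ R ∈ qs, R j = Q j → R = Q) (sQk : ∀ R ∈ qs, R k = Q k → R = Q)
    (sQ'j : ∀ R ∈ qs, R j = Q' j → R = Q') (sQ'k : ∀ R ∈ qs, R k = Q' k → R = Q')
    (sPi : ∀ R ∈ qs, R i = P i → R = P) (sPk : ∀ R ∈ qs, R k = P k → R = P)
    (sDi : ∀ R ∈ qs, R i = D i → R = D) (sDj : ∀ R ∈ qs, R j = D j → R = D)
    (hA : m j = Q k) (hB : Q' j = m k) : False := by
  have F3 : m i = P k ∨ P i = m k :=
    L_fam hc hF hij.symm hjk hik hP sPi sPk (hm i) (hm k)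
  have F4 : m i = D j ∨ D i = m j :=
    L_fam hc hF hik.symm hjk.symm hij hD sDi sDj (hm i) (hm j)
  have P2 : Q' j = P k ∨ Q' j = m i ∨ P k = m i ∨ m j = Q' k ∨ m j = P i ∨ Q' k = P i :=
    L_P hF hjk hij.symm hik.symm hQ' hP hQ'P sQ'j sQ'k sPk sPi (hm j) (hm i)
  have P3 : Q k = D j ∨ Q k = m i ∨ D j = m i ∨ m k = Q j ∨ m k = D i ∨ Q j = D i :=
    L_P hF hjk.symm hik.symm hij.symm hQ hD hQD sQk sQj sDj sDi (hm k) (hm i)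
  have P5 : D j = P i ∨ D j = m k ∨ P i = m k ∨ m j = D i ∨ m j = P k ∨ D i = P k :=
    L_P hF hij.symm hjk hik hD hP hPD.symm sDj sDi sPi sPk (hm j) (hm k)
  have P6 : P i = D j ∨ P i = Q k ∨ D j = Q k ∨ D i = Q j ∨ D i = P k ∨ Q j = P k :=
    L_P3 hF hij hik hjk hQ hP hD hQP hQD hPD sPi sDi sDj sQj sQk sPk
  have P7 : P i = D j ∨ P i = Q' k ∨ D j = Q' k ∨ D i = Q' j ∨ D i = P k ∨ Q' j = P k :=
    L_P3 hF hij hik hjk hQ' hP hD hQ'P hQ'D hPD sPi sDi sDj sQ'j sQ'k sPk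
  have key : m i = D j → False := by
    intro hIIe
    have hre : P k = D j → False := by
      intro hre
      rcases P5 with h|h|h|h|h|h
      · exact hm i P hP (h.symm.trans hIIe.symm)
      · exact hQ'D (sDj Q' hQ' (hB.trans h.symm))
      · rcases P7 with g|g|g|g|g|g
        · exact hm i P hP (g.trans hIIe.symm)
        · exact hm k Q' hQ' (g.symm.trans h)
        · exact hQ'P (sPk Q' hQ' (g.symm.trans hre.symm))
        · exact hPD (sPi D hD ((g.trans hB).trans h.symm)).symm
        · exact hm i D hD ((g.trans hre).trans hIIe.symm)
        · exact hm k P hP (g.symm.trans hB)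
      · rcases P6 with g|g|g|g|g|g
        · exact hm i P hP (g.trans hIIe.symm)
        · exact hPD (sDi P hP ((g.trans hA.symm).trans h))
        · exact hm j D hD (g.trans hA.symm)
        · exact hm j Q hQ (g.symm.trans h.symm)
        · exact hm j D hD (h.trans (g.trans hre)).symm
        · exact hQD (sDj Q hQ (g.trans hre))
      · exact hm j D hD (h.trans hre).symm
      · exact hm i D hD ((h.trans hre).trans hIIe.symm)
    rcases F3 with h|h
    · exact hre (h.symm.trans hIIe)
    · rcases P2 with g|g|g|g|g|g
      · exact hm k P hP (g.symm.trans hB)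
      · exact hQ'D (sDj Q' hQ' (g.trans hIIe))
      · exact hre (g.trans hIIe)
      · exact hQQ' (sQ'k Q hQ (hA.symm.trans g))
      · exact hm k Q hQ (hA.symm.trans (g.trans h))
      · exact hm k Q' hQ' (g.trans h)
  rcases F4 with h|h
  · exact key h
  · rcases P3 with g|g|g|g|g|g
    · exact hm j D hD (g.symm.trans hA.symm)
    · exact hm i D hD (h.trans (hA.trans g))
    · exact key g.symm
    · exact hQQ' (sQj Q' hQ' (hB.trans g)).symm
    · exact hm k Q hQ (hA.symm.trans (g.trans h).symm)
    · exact hm j Q hQ (g.trans h)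

lemma C211 (hc : 5 ≤ c) (hF : Feasible qs)
    {i j k : Fin 3} (hij : i ≠ j) (hik : i ≠ k) (hjk : j ≠ k)
    (m : Fin 3 → Fin c) (hm : ∀ t : Fin 3, ∀ R ∈ qs, R t ≠ m t)
    {Q Q' P D : Fin 3 → Fin c}
    (hQ : Q ∈ qs) (hQ' : Q' ∈ qs) (hP : P ∈ qs) (hD : D ∈ qs)
    (hQQ' : Q ≠ Q') (hQP : Q ≠ P) (hQD : Q ≠ D)
    (hQ'P : Q' ≠ P) (hQ'D : Q' ≠ D) (hPD : P ≠ D)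
    (sQj : ∀ R ∈ qs, R j = Q j → R = Q) (sQk : ∀ R ∈ qs, R k = Q k → R = Q)
    (sQ'j : ∀ R ∈ qs, R j = Q' j → R = Q') (sQ'k : ∀ R ∈ qs, R k = Q' k → R = Q')
    (sPi : ∀ R ∈ qs, R i = P i → R = P) (sPk : ∀ R ∈ qs, R k = P k → R = P)
    (sDi : ∀ R ∈ qs, R i = D i → R = D) (sDj : ∀ R ∈ qs, R j = D j → R = D) :
    False := by
  have F1 : m j = Q k ∨ Q j = m k :=
    L_fam hc hF hij hik hjk hQ sQj sQk (hm j) (hm k)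
  have F2 : m j = Q' k ∨ Q' j = m k :=
    L_fam hc hF hij hik hjk hQ' sQ'j sQ'k (hm j) (hm k)
  rcases F1 with h1|h1 <;> rcases F2 with h2|h2
  · exact hQQ' (sQ'k Q hQ (h1.symm.trans h2))
  · exact caseD hc hF hij hik hjk m hm hQ hQ' hP hD hQQ' hQP hQD hQ'P hQ'D hPD
      sQj sQk sQ'j sQ'k sPi sPk sDi sDj h1 h2
  · exact caseD hc hF hij hik hjk m hm hQ' hQ hP hD hQQ'.symm hQ'P hQ'D hQP hQD hPD
      sQ'j sQ'k sQj sQk sPi sPk sDi sDj h2 h1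
  · exact hQQ' (sQj Q' hQ' (h2.trans h1.symm)).symm
end CASES

lemma classify (t : Fin 4 → Fin 3) :
    (∃ a b e : Fin 4, a ≠ b ∧ a ≠ e ∧ b ≠ e ∧ t a = t b ∧ t b = t e) ∨
    (∃ a b e d : Fin 4, a ≠ b ∧ a ≠ e ∧ a ≠ d ∧ b ≠ e ∧ b ≠ d ∧ e ≠ d ∧
      t a = t b ∧ t e = t d ∧ t a ≠ t e) ∨
    (∃ a b e d : Fin 4, a ≠ b ∧ a ≠ e ∧ a ≠ d ∧ b ≠ e ∧ b ≠ d ∧ e ≠ d ∧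
      t a = t b ∧ t a ≠ t e ∧ t a ≠ t d ∧ t e ≠ t d) := by
  revert t; decide

lemma two_others (i : Fin 3) : ∃ j k : Fin 3, i ≠ j ∧ i ≠ k ∧ j ≠ k := by
  revert i; decide

lemma one_other (i j : Fin 3) : ∃ k : Fin 3, i ≠ k ∧ j ≠ k := by
  revert i j; decide

end S17


open S17 in
theorem statement17 (c : ℕ) (hc : 5 ≤ c) (qs : List (Fin 3 → Fin c))
    (hqs : Feasible qs)
    (hmiss : ∀ i : Fin 3, ∃ q : Fin c, ∀ Q ∈ qs, Q i ≠ q) :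
    qs.countP (fun Q => decide
      ((2 ≤ occ qs 0 (Q 0) ∧ occ qs 1 (Q 1) = 1 ∧ occ qs 2 (Q 2) = 1) ∨
       (occ qs 0 (Q 0) = 1 ∧ 2 ≤ occ qs 1 (Q 1) ∧ occ qs 2 (Q 2) = 1) ∨
       (occ qs 0 (Q 0) = 1 ∧ occ qs 1 (Q 1) = 1 ∧ 2 ≤ occ qs 2 (Q 2)))) ≤ 3 := by
  classical
  by_contra hcon
  push_neg at hcon
  rw [List.countP_eq_length_filter] at hcon
  set l : List (Fin 3 → Fin c) := qs.filter (fun Q => decide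
      ((2 ≤ occ qs 0 (Q 0) ∧ occ qs 1 (Q 1) = 1 ∧ occ qs 2 (Q 2) = 1) ∨
       (occ qs 0 (Q 0) = 1 ∧ 2 ≤ occ qs 1 (Q 1) ∧ occ qs 2 (Q 2) = 1) ∨
       (occ qs 0 (Q 0) = 1 ∧ occ qs 1 (Q 1) = 1 ∧ 2 ≤ occ qs 2 (Q 2)))) with hl
  have hlen : 4 ≤ l.length := hcon
  have hnd : l.Nodup := hqs.1.filter _
  have hidx : ∀ n : Fin 4, (n : ℕ) < l.length := fun n => lt_of_lt_of_le n.isLt hlen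
  set F : Fin 4 → (Fin 3 → Fin c) := fun n => l.get ⟨n, hidx n⟩ with hFdef
  have hFl : ∀ n, F n ∈ l := fun n => l.get_mem ⟨n, hidx n⟩
  have hFqs : ∀ n, F n ∈ qs := fun n => (List.mem_filter.mp (hFl n)).1
  have hFprop : ∀ n,
      (2 ≤ occ qs 0 (F n 0) ∧ occ qs 1 (F n 1) = 1 ∧ occ qs 2 (F n 2) = 1) ∨
      (occ qs 0 (F n 0) = 1 ∧ 2 ≤ occ qs 1 (F n 1) ∧ occ qs 2 (F n 2) = 1) ∨
      (occ qs 0 (F n 0) = 1 ∧ occ qs 1 (F n 1) = 1 ∧ 2 ≤ occ qs 2 (F n 2)) :=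
    fun n => of_decide_eq_true ((List.mem_filter.mp (hFl n)).2)
  have hFne : ∀ a b : Fin 4, a ≠ b → F a ≠ F b := by
    intro a b hab h
    apply hab
    have h2 := (List.Nodup.get_inj_iff hnd).mp h
    have h3 := congrArg (fun x : Fin l.length => (x : ℕ)) h2
    exact Fin.ext h3
  have hT : ∀ n, ∃ tn : Fin 3, ∀ u : Fin 3, u ≠ tn → occ qs u (F n u) = 1 := by
    intro n
    rcases hFprop n with ⟨h0, h1, h2⟩ | ⟨h0, h1, h2⟩ | ⟨h0, h1, h2⟩
    · refine ⟨0, fun u hu => ?_⟩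
      fin_cases u
      · exact absurd rfl hu
      · exact h1
      · exact h2
    · refine ⟨1, fun u hu => ?_⟩
      fin_cases u
      · exact h0
      · exact absurd rfl hu
      · exact h2
    · refine ⟨2, fun u hu => ?_⟩
      fin_cases u
      · exact h0
      · exact h1
      · exact absurd rfl hu
  choose t ht using hT
  have hsing : ∀ n (u : Fin 3), u ≠ t n → ∀ R ∈ qs, R u = F n u → R = F n :=
    fun n u hu => single_of_occ (hFqs n) (ht n u hu)
  choose m hm using hmiss
  rcases classify t with ⟨a, b, e, hab, hae, hbe, h1, h2⟩ |
      ⟨a, b, e, d, hab, hae, had, hbe, hbd, hed, hE1, hE2, hN⟩ |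
      ⟨a, b, e, d, hab, hae, had, hbe, hbd, hed, hE1, hN1, hN2, hN3⟩
  · -- three of the same type
    obtain ⟨j, k, hij, hik, hjk⟩ := two_others (t a)
    have wb : ∀ u : Fin 3, u ≠ t a → u ≠ t b := fun u hu hh => hu (hh.trans h1.symm)
    have we : ∀ u : Fin 3, u ≠ t a → u ≠ t e :=
      fun u hu hh => hu (hh.trans (h1.trans h2).symm)
    exact C300 hc hqs hij hik hjk m hm (hFqs a) (hFqs b) (hFqs e)
      (hFne a b hab) (hFne a e hae) (hFne b e hbe)
      (hsing a j (Ne.symm hij)) (hsing a k (Ne.symm hik))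
      (hsing b j (wb j (Ne.symm hij))) (hsing b k (wb k (Ne.symm hik)))
      (hsing e j (we j (Ne.symm hij))) (hsing e k (we k (Ne.symm hik)))
  · -- two pairs of types
    obtain ⟨k, hik, hjk⟩ := one_other (t a) (t e)
    have wb : ∀ u : Fin 3, u ≠ t a → u ≠ t b := fun u hu hh => hu (hh.trans hE1.symm)
    have wd : ∀ u : Fin 3, u ≠ t e → u ≠ t d := fun u hu hh => hu (hh.trans hE2.symm)
    exact C220 hc hqs hN hik hjk m hm (hFqs a) (hFqs b) (hFqs e) (hFqs d)
      (hFne a b hab) (hFne a e hae) (hFne a d had)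
      (hFne b e hbe) (hFne b d hbd) (hFne e d hed)
      (hsing a (t e) (Ne.symm hN)) (hsing a k (Ne.symm hik))
      (hsing b (t e) (wb (t e) (Ne.symm hN))) (hsing b k (wb k (Ne.symm hik)))
      (hsing e (t a) hN) (hsing e k (Ne.symm hjk))
      (hsing d (t a) (wd (t a) hN)) (hsing d k (wd k (Ne.symm hjk)))
  · -- one pair and two different types
    have wb : ∀ u : Fin 3, u ≠ t a → u ≠ t b := fun u hu hh => hu (hh.trans hE1.symm)
    exact C211 hc hqs hN1 hN2 hN3 m hm (hFqs a) (hFqs b) (hFqs e) (hFqs d)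
      (hFne a b hab) (hFne a e hae) (hFne a d had)
      (hFne b e hbe) (hFne b d hbd) (hFne e d hed)
      (hsing a (t e) (Ne.symm hN1)) (hsing a (t d) (Ne.symm hN2))
      (hsing b (t e) (wb (t e) (Ne.symm hN1))) (hsing b (t d) (wb (t d) (Ne.symm hN2)))
      (hsing e (t a) hN1) (hsing e (t d) (Ne.symm hN3))
      (hsing d (t a) hN2) (hsing d (t e) hN3)
end
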